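/- arXiv:2411.15109 — 9 statements merged into one kernel-verified Lean document; each statement's English description precedes it below -/
import Mathlib

section
/- Let H be a hypothesis class (a set of functions from ℕ to {0,1}) and let L be an online learner for H that makes at most d mistakes on every H-realizable sample, for some natural number d. Then for every function f ∈ H there exists a finite sample S consistent with f such that the hypothesis L_S of L after sample S coincides with f on all of ℕ. -/
/-- A sample: a finite sequence of (point, label) pairs. -/
abbrev Sample := List (ℕ × Bool)

/-- A sample is consistent with `f` if `f` agrees with every labeled pair. -/
def Consistent (f : ℕ → Bool) (S : Sample) : Prop := ∀ p ∈ S, f p.1 = p.2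

/-- A sample is realizable by `H` if some function in `H` is consistent with it. -/
def Realizable (H : Set (ℕ → Bool)) (S : Sample) : Prop := ∃ f ∈ H, Consistent f S

/-- A (total) learner maps a sample and a query point to a prediction. -/
abbrev Learner := Sample → ℕ → Bool

/-- Number of sequential prediction mistakes of learner `L` on sample `S`. -/
def mistakes (L : Learner) (S : Sample) : ℕ :=
  (List.range S.length).countP fun i =>
    decide (L (S.take i) (S.getD i (0, false)).1 ≠ (S.getD i (0, false)).2)

/-- Code of a Littlestone tree: association list assigning labels to nodes
(nodes are indexed by the bit-path leading to them; missing nodes get label 0). -/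
abbrev TreeCode := List (List Bool × ℕ)

/-- Label of the node reached by path `p` in the tree coded by `T`. -/
def nodeLabel (T : TreeCode) (p : List Bool) : ℕ := (T.lookup p).getD 0

/-- The sample written along the branch `p` (a list of edge bits) in the tree `T`. -/
def branchSample (T : TreeCode) (p : List Bool) : Sample :=
  (List.range p.length).map fun i => (nodeLabel T (p.take i), p.getD i false)

/-- `H` has Littlestone dimension at most `d`: every Littlestone tree of depth `d+1`
has a leaf whose branch sample is not `H`-realizable. -/
def LdimLe (H : Set (ℕ → Bool)) (d : ℕ) : Prop :=
  ∀ T : TreeCode, ∃ p : List Bool, p.length = d + 1 ∧ ¬ Realizable H (branchSample T p)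

/-- The Littlestone dimension of `H` (`⊤` if infinite). -/
noncomputable def Ldim (H : Set (ℕ → Bool)) : ℕ∞ :=
  sInf ((↑) '' {d : ℕ | LdimLe H d})

/-- `H` has effective Littlestone dimension at most `d`: a total computable function
indicates, in every depth-`(d+1)` Littlestone tree, a leaf that is not `H`-realizable. -/
def EldimLe (H : Set (ℕ → Bool)) (d : ℕ) : Prop :=
  ∃ A : TreeCode → List Bool, Computable A ∧
    ∀ T, (A T).length = d + 1 ∧ ¬ Realizable H (branchSample T (A T))

/-- The effective Littlestone dimension of `H` (`⊤` if infinite). -/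
noncomputable def Eldim (H : Set (ℕ → Bool)) : ℕ∞ :=
  sInf ((↑) '' {d : ℕ | EldimLe H d})

/-- The cylinder induced by a sample: all functions consistent with it. -/
def Cyl (S : Sample) : Set (ℕ → Bool) := {f | Consistent f S}

/-- Effectively open subset of Cantor space: union of a computably enumerated
family of cylinders. -/
def EffOpen (X : Set (ℕ → Bool)) : Prop :=
  ∃ g : ℕ → Sample, Computable g ∧ X = ⋃ n, Cyl (g n)

/-- Effectively closed subset of Cantor space: complement is effectively open. -/
def EffClosed (X : Set (ℕ → Bool)) : Prop := EffOpen Xᶜ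

lemma mistakes_concat (L : Learner) (S : Sample) (x : ℕ) (y : Bool) :
    mistakes L (S ++ [(x, y)]) = mistakes L S + (if L S x = y then 0 else 1) := by
  unfold mistakes
  rw [List.length_append, List.length_singleton, List.range_succ, List.countP_append]
  congr 1
  · apply List.countP_congr
    intro i hi
    rw [List.mem_range] at hi
    rw [List.take_append_of_le_length (le_of_lt hi),
        List.getD_append _ _ _ _ hi]
  · simp only [List.countP_singleton]
    rw [List.take_left, List.getD_append_right _ _ _ _ (le_refl _)]
    simp

theorem stmt0 (H : Set (ℕ → Bool)) (L : Learner) (d : ℕ)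
    (hL : ∀ S : Sample, Realizable H S → mistakes L S ≤ d) :
    ∀ f ∈ H, ∃ S : Sample, Consistent f S ∧ ∀ x, L S x = f x := by
  intro f hf
  by_contra h
  push_neg at h
  have h' : ∀ S : Sample, ∃ x, Consistent f S → L S x ≠ f x := by
    intro S
    by_cases hS : Consistent f S
    · obtain ⟨x, hx⟩ := h S hS; exact ⟨x, fun _ => hx⟩
    · exact ⟨0, fun hS' => absurd hS' hS⟩
  choose g hg using h'
  -- build the adversarial sequence
  let T : ℕ → Sample := fun n => Nat.rec [] (fun _ S => S ++ [(g S, f (g S))]) n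
  have key : ∀ n, Consistent f (T n) ∧ mistakes L (T n) = n := by
    intro n
    induction n with
    | zero =>
      constructor
      · intro p hp; simp [T] at hp
      · simp [T, mistakes]
    | succ n ih =>
      obtain ⟨hc, hm⟩ := ih
      have hTn : T (n + 1) = T n ++ [(g (T n), f (g (T n)))] := rfl
      constructor
      · intro p hp
        rw [hTn, List.mem_append] at hp
        rcases hp with hp | hp
        · exact hc p hp
        · simp at hp; subst hp; rfl
      · rw [hTn, mistakes_concat, hm, if_neg (hg (T n) hc)]
  obtain ⟨hc, hm⟩ := key (d + 1)
  have := hL (T (d + 1)) ⟨f, hf, hc⟩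
  omega
end

section
/- Let H be a hypothesis class that admits a computable online learner L making at most d mistakes on every H-realizable sample. Then every function f ∈ H is computable. -/
/-- Auxiliary run of a learner fed the table `t` for the first `N` points and
its own predictions afterwards. -/
def runAux (L : Learner) (N : ℕ) (t : List Bool) : ℕ → Sample
  | 0 => []
  | n + 1 => runAux L N t n ++
      [(n, if n < N then t.getD n false else L (runAux L N t n) n)]

def gAux (L : Learner) (N : ℕ) (t : List Bool) (n : ℕ) : Bool :=
  if n < N then t.getD n false else L (runAux L N t n) n

lemma stepAux_computable (L : Learner) (N : ℕ) (t : List Bool) (hc : Computable₂ L) :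
    Computable₂ (fun (S : Sample) (n : ℕ) =>
      if n < N then t.getD n false else L S n) := by
  have hcond : Computable (fun p : Sample × ℕ => decide (p.2 < N)) :=
    (Primrec.nat_lt.comp Primrec.snd (Primrec.const N)).decide.to_comp
  have hthen : Computable (fun p : Sample × ℕ => t.getD p.2 false) :=
    ((Primrec.list_getD false).comp (Primrec.const t) Primrec.snd).to_comp
  have helse : Computable (fun p : Sample × ℕ => L p.1 p.2) :=
    hc.comp Computable.fst Computable.snd
  exact (Computable.cond hcond hthen helse).of_eq fun p => by
    by_cases h : p.2 < N <;> simp [h]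

lemma runAux_computable (L : Learner) (N : ℕ) (t : List Bool) (hc : Computable₂ L) :
    Computable (runAux L N t) := by
  have hstep := stepAux_computable L N t hc
  have h1 : Computable (fun q : ℕ × (ℕ × Sample) => q.2.2) :=
    Computable.snd.comp Computable.snd
  have h2 : Computable (fun q : ℕ × (ℕ × Sample) => q.2.1) :=
    Computable.fst.comp Computable.snd
  have h3 : Computable (fun q : ℕ × (ℕ × Sample) =>
      if q.2.1 < N then t.getD q.2.1 false else L q.2.2 q.2.1) :=
    hstep.comp h1 h2
  have h4 : Computable (fun q : ℕ × (ℕ × Sample) =>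
      ([(q.2.1, if q.2.1 < N then t.getD q.2.1 false else L q.2.2 q.2.1)] : Sample)) :=
    Computable.list_cons.comp (h2.pair h3) (Computable.const [])
  have h : Computable₂ (fun (_ : ℕ) (p : ℕ × Sample) =>
      p.2 ++ [(p.1, if p.1 < N then t.getD p.1 false else L p.2 p.1)]) :=
    (Primrec.list_append.to_comp : Computable₂ _).comp h1 h4
  exact (Computable.nat_rec Computable.id (Computable.const []) h).of_eq fun n => by
    induction n with
    | zero => rfl
    | succ k ih => simp [runAux, ← ih]

lemma gAux_computable (L : Learner) (N : ℕ) (t : List Bool) (hc : Computable₂ L) :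
    Computable (gAux L N t) :=
  (stepAux_computable L N t hc).comp (runAux_computable L N t hc) Computable.id

/-- The sample of `f` on the first `n` points. -/
def trueSample (f : ℕ → Bool) (n : ℕ) : Sample :=
  (List.range n).map fun i => (i, f i)

lemma trueSample_length (f : ℕ → Bool) (n : ℕ) : (trueSample f n).length = n := by
  simp [trueSample]

lemma trueSample_take (f : ℕ → Bool) {i n : ℕ} (h : i ≤ n) :
    (trueSample f n).take i = trueSample f i := by
  simp [trueSample, ← List.map_take, List.take_range, Nat.min_eq_left h]

lemma trueSample_getD (f : ℕ → Bool) {i n : ℕ} (h : i < n) :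
    (trueSample f n).getD i (0, false) = (i, f i) := by
  rw [List.getD_eq_getElem _ _ (by simpa [trueSample] using h)]
  simp [trueSample]

lemma trueSample_succ (f : ℕ → Bool) (n : ℕ) :
    trueSample f (n + 1) = trueSample f n ++ [(n, f n)] := by
  simp [trueSample, List.range_succ]

lemma mistakes_trueSample (L : Learner) (f : ℕ → Bool) (n : ℕ) :
    mistakes L (trueSample f n) =
      (List.range n).countP fun i => decide (L (trueSample f i) i ≠ f i) := by
  unfold mistakes
  rw [trueSample_length]
  refine List.countP_congr fun i hi => ?_
  have hlt : i < n := List.mem_range.mp hi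
  rw [trueSample_take f hlt.le, trueSample_getD f hlt]

theorem stmt1 (H : Set (ℕ → Bool)) (L : Learner) (d : ℕ)
    (hc : Computable₂ L)
    (hL : ∀ S : Sample, Realizable H S → mistakes L S ≤ d) :
    ∀ f ∈ H, Computable f := by
  intro f hf
  -- the true samples are realizable
  have hreal : ∀ n, Realizable H (trueSample f n) := by
    intro n
    refine ⟨f, hf, fun p hp => ?_⟩
    simp only [trueSample, List.mem_map, List.mem_range] at hp
    obtain ⟨i, -, rfl⟩ := hp
    rfl
  set P : ℕ → Prop := fun i => L (trueSample f i) i ≠ f i with hP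
  set c : ℕ → ℕ := fun n => (List.range n).countP fun i => decide (P i) with hcdef
  have hcd : ∀ n, c n ≤ d := fun n => by
    have := hL (trueSample f n) (hreal n)
    rwa [mistakes_trueSample] at this
  have hmono : ∀ {m n : ℕ}, m ≤ n → c m ≤ c n := by
    intro m n h
    exact List.Sublist.countP_le (List.range_sublist.mpr h)
  -- pick N achieving the supremum of c
  have hbdd : BddAbove (Set.range c) := ⟨d, by rintro x ⟨n, rfl⟩; exact hcd n⟩
  obtain ⟨N, hN⟩ := Nat.sSup_mem (Set.range_nonempty c) hbdd
  have hstable : ∀ n, N ≤ n → ¬ P n := by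
    intro n hn hPn
    have h1 : c n = c N := le_antisymm (hN ▸ le_csSup hbdd ⟨n, rfl⟩) (hmono hn)
    have h2 : c (n + 1) = c n + 1 := by
      have hd : decide (P n) = true := decide_eq_true hPn
      simp [hcdef, List.range_succ, List.countP_append, hd]
    have h3 : c (n + 1) ≤ c N := hN ▸ le_csSup hbdd ⟨n + 1, rfl⟩
    omega
  have hcorrect : ∀ n, N ≤ n → L (trueSample f n) n = f n := by
    intro n hn
    by_contra h
    exact hstable n hn h
  -- the hardcoded table of initial values
  set t : List Bool := (List.range N).map f with ht
  have hrun : ∀ n, runAux L N t n = trueSample f n := by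
    intro n
    induction n with
    | zero => rfl
    | succ k ih =>
      rw [runAux, ih, trueSample_succ]
      congr 2
      by_cases hk : k < N
      · rw [if_pos hk, List.getD_eq_getElem _ _
          (show k < t.length by simp only [ht, List.length_map, List.length_range]; exact hk)]
        simp [ht]
      · simp [hk, hcorrect k (le_of_not_gt hk)]
  have hg : ∀ n, gAux L N t n = f n := by
    intro n
    unfold gAux
    rw [hrun]
    by_cases hk : n < N
    · rw [if_pos hk, List.getD_eq_getElem _ _
        (show n < t.length by simp only [ht, List.length_map, List.length_range]; exact hk)]
      simp [ht]
    · simp [hk, hcorrect n (le_of_not_gt hk)]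
  exact (gAux_computable L N t hc).of_eq hg
end

section
/- Let H be a hypothesis class of the form H = {the all-zero function} ∪ H₁ ∪ H₂ ∪ H₃ ∪ …, where the sets of natural numbers on which functions of distinct Hᵢ take value 1 lie in pairwise disjoint blocks Bᵢ ⊆ ℕ, every function in Hᵢ takes value 1 somewhere in Bᵢ and value 0 outside Bᵢ, and each Hᵢ has at most 2 elements. Then H admits an online learner making at most 2 mistakes on every H-realizable sample; consequently ldim(H) ≤ 2. -/
/- ### auxiliary lemmas -/

lemma consistent_sublist' {f : ℕ → Bool} {S S' : Sample} (h : S' ⊆ S) (hc : Consistent f S) :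
    Consistent f S' := fun p hp => hc p (h hp)

lemma consistent_take' {f : ℕ → Bool} {S : Sample} (i : ℕ) (hc : Consistent f S) :
    Consistent f (S.take i) := consistent_sublist' (List.take_subset i S) hc

lemma take_subset_take' {S : Sample} {i j : ℕ} (h : i ≤ j) : S.take i ⊆ S.take j := by
  intro p hp
  rw [show S.take i = (S.take j).take i by rw [List.take_take, Nat.min_eq_left h]] at hp
  exact List.take_subset _ _ hp

lemma getElem_mem_take' {S : Sample} {i j : ℕ} (h : i < j) (hi : i < S.length) :
    S[i] ∈ S.take j := by
  have h1 : i < (S.take j).length := by simp [List.length_take]; omega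
  have h2 : (S.take j)[i] = S[i] := List.getElem_take
  rw [← h2]; exact List.getElem_mem h1

open Classical in
/-- The generic consistent-hypothesis learner, preferring the all-zero function. -/
noncomputable def cLearner (H : Set (ℕ → Bool)) : Learner := fun S q =>
  if Consistent (fun _ => false) S then false
  else if hc : ∃ f ∈ H, Consistent f S then hc.choose q
  else false

lemma cLearner_spec {H : Set (ℕ → Bool)} {S : Sample}
    (hz : ¬ Consistent (fun _ => false) S) (hc : ∃ f ∈ H, Consistent f S) :
    ∃ h, h ∈ H ∧ Consistent h S ∧ ∀ q, cLearner H S q = h q := by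
  refine ⟨hc.choose, hc.choose_spec.1, hc.choose_spec.2, fun q => ?_⟩
  simp only [cLearner, if_neg hz, dif_pos hc]

/-- The main mistake bound. -/
lemma cLearner_bound (Hs : ℕ → Set (ℕ → Bool)) (B : ℕ → Set ℕ)
    (hdisj : Pairwise (Function.onFun Disjoint B))
    (hsupp : ∀ i, ∀ f ∈ Hs i, (∃ x ∈ B i, f x = true) ∧ ∀ x ∉ B i, f x = false)
    (hcard : ∀ i, ∃ f g : ℕ → Bool, Hs i ⊆ {f, g}) (S : Sample)
    (hr : Realizable ({fun _ => false} ∪ ⋃ i, Hs i) S) :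
    mistakes (cLearner ({fun _ => false} ∪ ⋃ i, Hs i)) S ≤ 2 := by
  set H : Set (ℕ → Bool) := {fun _ => false} ∪ ⋃ i, Hs i with hH
  set L : Learner := cLearner H with hL
  -- membership lemma
  have mem_block : ∀ g ∈ H, ∀ x : ℕ, g x = true → ∃ j, g ∈ Hs j ∧ x ∈ B j := by
    intro g hg x hgx
    rcases hg with hg | hg
    · simp only [Set.mem_singleton_iff] at hg; rw [hg] at hgx; simp at hgx
    · rcases Set.mem_iUnion.1 hg with ⟨j, hj⟩
      refine ⟨j, hj, ?_⟩
      by_contra hx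
      rw [(hsupp j g hj).2 x hx] at hgx; simp at hgx
  by_contra hgt
  push_neg at hgt
  -- extract three mistake indices
  set n := S.length with hn
  set P : ℕ → Bool := fun i =>
    decide (L (S.take i) (S.getD i (0, false)).1 ≠ (S.getD i (0, false)).2) with hP
  have hcnt : 3 ≤ (List.range n).countP P := hgt
  set l : List ℕ := (List.range n).filter P with hl
  have hlen : 3 ≤ l.length := by rwa [List.countP_eq_length_filter] at hcnt
  have hpw : l.Pairwise (· < ·) := (List.pairwise_lt_range (n := n)).sublist List.filter_sublist
  have h0 : 0 < l.length := by omega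
  have h1 : 1 < l.length := by omega
  have h2' : 2 < l.length := by omega
  set i₁ := l[0] with hi1; set i₂ := l[1] with hi2; set i₃ := l[2] with hi3
  have hlt12 : i₁ < i₂ := List.pairwise_iff_getElem.1 hpw 0 1 h0 h1 (by omega)
  have hlt23 : i₂ < i₃ := List.pairwise_iff_getElem.1 hpw 1 2 h1 h2' (by omega)
  have hmem : ∀ k (hk : k < l.length), l[k] < n ∧ P l[k] = true := by
    intro k hk
    have := List.mem_filter.1 (List.getElem_mem hk)
    exact ⟨List.mem_range.1 this.1, this.2⟩
  obtain ⟨hn1, hP1⟩ := hmem 0 h0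
  obtain ⟨hn2, hP2⟩ := hmem 1 h1
  obtain ⟨hn3, hP3⟩ := hmem 2 h2'
  -- decode P i
  have hPd : ∀ i (hi : i < n), P i = true →
      L (S.take i) S[i].1 ≠ S[i].2 := by
    intro i hi hPi
    have := of_decide_eq_true hPi
    rwa [List.getD_eq_getElem S (0, false) hi] at this
  have hm1 := hPd i₁ hn1 hP1
  have hm2 := hPd i₂ hn2 hP2
  have hm3 := hPd i₃ hn3 hP3
  -- target
  obtain ⟨f₀, hf₀H, hf₀⟩ := hr
  -- zero is inconsistent with S.take i₂
  have hz2 : ¬ Consistent (fun _ => false) (S.take i₂) := by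
    by_cases hz1 : Consistent (fun _ => false) (S.take i₁)
    · have hpred : L (S.take i₁) S[i₁].1 = false := by
        simp only [hL, cLearner, if_pos hz1]
      have hlab : S[i₁].2 = true := by
        cases h : S[i₁].2
        · exact absurd (by rw [hpred, h]) hm1
        · rfl
      intro hz2
      have := hz2 S[i₁] (getElem_mem_take' hlt12 hn1)
      rw [hlab] at this; simp at this
    · exact fun h => hz1 (consistent_sublist' (take_subset_take' hlt12.le) h)
  have hz3 : ¬ Consistent (fun _ => false) (S.take i₃) :=
    fun h => hz2 (consistent_sublist' (take_subset_take' hlt23.le) h)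
  -- choose hypotheses at steps i₂, i₃
  obtain ⟨h₂, hh₂H, hh₂c, hh₂e⟩ := cLearner_spec hz2 ⟨f₀, hf₀H, consistent_take' i₂ hf₀⟩
  obtain ⟨h₃, hh₃H, hh₃c, hh₃e⟩ := cLearner_spec hz3 ⟨f₀, hf₀H, consistent_take' i₃ hf₀⟩
  replace hm2 : h₂ S[i₂].1 ≠ S[i₂].2 := by rw [← hh₂e]; exact hm2
  replace hm3 : h₃ S[i₃].1 ≠ S[i₃].2 := by rw [← hh₃e]; exact hm3
  have hf₀2 : f₀ S[i₂].1 = S[i₂].2 := hf₀ S[i₂] (List.getElem_mem hn2)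
  have hf₀3 : f₀ S[i₃].1 = S[i₃].2 := hf₀ S[i₃] (List.getElem_mem hn3)
  have hne2 : h₂ ≠ f₀ := fun h => hm2 (by rw [h, hf₀2])
  have hne3 : h₃ ≠ f₀ := fun h => hm3 (by rw [h, hf₀3])
  have hne23 : h₂ ≠ h₃ := by
    intro h
    apply hm2
    rw [h]
    exact hh₃c S[i₂] (getElem_mem_take' hlt23 hn2)
  -- a point labeled true in S.take i₂
  have : ∃ p ∈ S.take i₂, p.2 = true := by
    by_contra hc'
    apply hz2
    intro p hp
    cases h : p.2 with
    | false => rfl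
    | true => exact absurd ⟨p, hp, h⟩ hc'
  obtain ⟨p, hp, hpt⟩ := this
  have hx2 : h₂ p.1 = true := by rw [hh₂c p hp, hpt]
  have hx3 : h₃ p.1 = true := by rw [hh₃c p (take_subset_take' hlt23.le hp), hpt]
  have hx0 : f₀ p.1 = true := by rw [hf₀ p (List.take_subset _ _ hp), hpt]
  obtain ⟨j₂, hj₂, hb₂⟩ := mem_block h₂ hh₂H p.1 hx2
  obtain ⟨j₃, hj₃, hb₃⟩ := mem_block h₃ hh₃H p.1 hx3
  obtain ⟨j₀, hj₀, hb₀⟩ := mem_block f₀ hf₀H p.1 hx0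
  have hjeq : ∀ {a b : ℕ}, p.1 ∈ B a → p.1 ∈ B b → a = b := by
    intro a b ha hb
    by_contra hab
    exact Set.disjoint_left.1 (hdisj hab) ha hb
  have e20 : j₂ = j₀ := hjeq hb₂ hb₀
  have e30 : j₃ = j₀ := hjeq hb₃ hb₀
  rw [e20] at hj₂; rw [e30] at hj₃
  obtain ⟨f, g, hfg⟩ := hcard j₀
  have m2 := hfg hj₂
  have m3 := hfg hj₃
  have m0 := hfg hj₀
  simp only [Set.mem_insert_iff, Set.mem_singleton_iff] at m2 m3 m0
  rcases m2 with e2 | e2 <;> rcases m3 with e3 | e3 <;> rcases m0 with e0 | e0 <;>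
    first
      | exact hne23 (e2.trans e3.symm)
      | exact hne2 (e2.trans e0.symm)
      | exact hne3 (e3.trans e0.symm)

/- ### the adversarial path against a learner -/

def advPath (L : Learner) (T : TreeCode) : ℕ → List Bool
  | 0 => []
  | n+1 => advPath L T n ++
      [! L (branchSample T (advPath L T n)) (nodeLabel T (advPath L T n))]

lemma advPath_length (L : Learner) (T : TreeCode) (n : ℕ) : (advPath L T n).length = n := by
  induction n with
  | zero => rfl
  | succ n ih => simp [advPath, ih]

lemma advPath_take (L : Learner) (T : TreeCode) {n m : ℕ} (h : n ≤ m) :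
    (advPath L T m).take n = advPath L T n := by
  induction m with
  | zero => interval_cases n; rfl
  | succ m ih =>
    rcases Nat.lt_or_ge n (m+1) with h' | h'
    · rw [advPath, List.take_append_of_le_length (by rw [advPath_length]; omega)]
      exact ih (by omega)
    · have : n = m + 1 := by omega
      subst this
      exact List.take_of_length_le (by rw [advPath_length])

lemma advPath_getD (L : Learner) (T : TreeCode) {n m : ℕ} (h : n < m) :
    (advPath L T m).getD n false =
      ! L (branchSample T (advPath L T n)) (nodeLabel T (advPath L T n)) := by
  have hlen : (advPath L T m).length = m := advPath_length L T m
  rw [List.getD_eq_getElem _ _ (by omega)]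
  have h1 : (advPath L T m)[n] = ((advPath L T m).take (n+1))[n]'(by
      simp [List.length_take, hlen]; omega) := List.getElem_take.symm
  rw [h1]
  have h2 : (advPath L T m).take (n+1) = advPath L T (n+1) := advPath_take L T (by omega)
  simp only [h2, advPath]
  exact List.getElem_concat_length (advPath_length L T n).symm _

lemma branchSample_length (T : TreeCode) (p : List Bool) :
    (branchSample T p).length = p.length := by simp [branchSample]

lemma branchSample_take (T : TreeCode) (p : List Bool) {i : ℕ} (h : i ≤ p.length) :
    (branchSample T p).take i = branchSample T (p.take i) := by
  unfold branchSample
  rw [← List.map_take, List.take_range, Nat.min_eq_left h, List.length_take,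
    Nat.min_eq_left h]
  apply List.map_congr_left
  intro j hj
  have hji : j < i := List.mem_range.1 hj
  congr 1
  · rw [List.take_take, Nat.min_eq_left hji.le]
  · rw [List.getD_eq_getElem _ _ (by omega), List.getD_eq_getElem _ _ (by
      simp [List.length_take]; omega)]
    exact List.getElem_take.symm

lemma mistakes_advPath (L : Learner) (T : TreeCode) :
    mistakes L (branchSample T (advPath L T 3)) = 3 := by
  set p := advPath L T 3 with hp
  have hplen : p.length = 3 := advPath_length L T 3
  set S := branchSample T p with hS
  have hSlen : S.length = 3 := by rw [hS, branchSample_length, hplen]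
  unfold mistakes
  rw [hSlen, List.countP_eq_length.mpr ?_, List.length_range]
  intro i hi
  have hi3 : i < 3 := List.mem_range.1 hi
  have hgd : S.getD i (0, false) = (nodeLabel T (advPath L T i),
      ! L (branchSample T (advPath L T i)) (nodeLabel T (advPath L T i))) := by
    rw [List.getD_eq_getElem _ _ (by omega)]
    have : S[i]'(by omega) =
        (nodeLabel T (p.take i), p.getD i false) := by
      simp [hS, branchSample]
    rw [this, advPath_take L T (by omega : i ≤ 3), advPath_getD L T hi3]
  have hst : S.take i = branchSample T (advPath L T i) := by
    rw [hS, branchSample_take T p (by omega), advPath_take L T (by omega : i ≤ 3)]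
  rw [hgd, hst]
  simp

lemma ldimLe_of_learner (H : Set (ℕ → Bool)) (L : Learner)
    (hb : ∀ S : Sample, Realizable H S → mistakes L S ≤ 2) : LdimLe H 2 := by
  intro T
  refine ⟨advPath L T 3, advPath_length L T 3, fun hr => ?_⟩
  have h1 := hb _ hr
  rw [mistakes_advPath] at h1
  omega


theorem stmt5 (Hs : ℕ → Set (ℕ → Bool)) (B : ℕ → Set ℕ)
    (hdisj : Pairwise (Function.onFun Disjoint B))
    (hsupp : ∀ i, ∀ f ∈ Hs i, (∃ x ∈ B i, f x = true) ∧ ∀ x ∉ B i, f x = false)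
    (hcard : ∀ i, ∃ f g : ℕ → Bool, Hs i ⊆ {f, g}) :
    (∃ L : Learner, ∀ S : Sample,
        Realizable ({fun _ => false} ∪ ⋃ i, Hs i) S → mistakes L S ≤ 2) ∧
      Ldim ({fun _ => false} ∪ ⋃ i, Hs i) ≤ 2 := by

  have hb := fun S => cLearner_bound Hs B hdisj hsupp hcard S
  refine ⟨⟨_, hb⟩, ?_⟩
  have h2 : LdimLe ({fun _ => false} ∪ ⋃ i, Hs i) 2 := ldimLe_of_learner _ _ hb
  exact sInf_le ⟨2, h2, by norm_num⟩
end

section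
/- Suppose there is a total computable function A that, on input a Littlestone tree T of depth d+1 (suitably encoded), outputs a leaf of T that is not H-realizable, where H has effective Littlestone dimension witnessed by A. Then the class Ĥ of all functions f : ℕ → {0,1} that 'agree with A' (i.e., for no depth-(d+1) Littlestone tree T is the path sample of the leaf A(T) consistent with f) contains H, has effective Littlestone dimension at most d, and is effectively closed as a subset of {0,1}^ℕ. -/
section Aux

def myLookup (T : TreeCode) (p : List Bool) : Option ℕ :=
  T.foldr (fun x acc => if x.1 = p then some x.2 else acc) none

lemma myLookup_eq (T : TreeCode) (p : List Bool) : myLookup T p = T.lookup p := by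
  induction T with
  | nil => rfl
  | cons a l ih =>
    by_cases h : a.1 = p
    · simp [myLookup, List.lookup, h]
    · simpa [myLookup, List.lookup, h, beq_eq_false_iff_ne.mpr (Ne.symm h)] using ih

lemma take_eq (p : List Bool) (i : ℕ) (h : i ≤ p.length) :
    p.take i = (List.range i).map fun j => p.getD j false := by
  apply List.ext_getElem
  · simp [h]
  · intro n h1 h2
    simp at h1 h2 ⊢
    rw [List.getElem?_eq_getElem (by omega)]
    rfl

def B (T : TreeCode) (p : List Bool) : Sample :=
  (List.range p.length).map fun i =>
    ((myLookup T ((List.range i).map fun j => p.getD j false)).getD 0, p.getD i false)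

lemma B_eq (T : TreeCode) (p : List Bool) : B T p = branchSample T p := by
  unfold B branchSample nodeLabel
  apply List.map_congr_left
  intro i hi
  simp at hi
  rw [myLookup_eq, ← take_eq p i (le_of_lt hi)]

theorem B_primrec : Primrec₂ B := by
  have hlook : Primrec₂ myLookup := by
    have := Primrec.list_foldr (α := TreeCode × List Bool) (β := List Bool × ℕ) (σ := Option ℕ)
      Primrec.fst (Primrec.const none) (h := fun q x => if x.1.1 = q.2 then some x.1.2 else x.2)
      ?_
    · exact this.of_eq fun q => by simp [myLookup]
    exact (Primrec.ite
      (PrimrecRel.comp Primrec.eq (Primrec.fst.comp (Primrec.fst.comp Primrec.snd)) (Primrec.snd.comp Primrec.fst))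
      (Primrec.option_some.comp (Primrec.snd.comp (Primrec.fst.comp Primrec.snd)))
      (Primrec.snd.comp Primrec.snd)).to₂
  have hgetD : Primrec₂ (fun (l : List Bool) (n : ℕ) => l.getD n false) := Primrec.list_getD false
  apply Primrec.list_map (Primrec.list_range.comp (Primrec.list_length.comp Primrec.snd))
  exact Primrec.to₂ (Primrec.pair
    (Primrec.option_getD.comp
      (hlook.comp (Primrec.fst.comp Primrec.fst)
        (Primrec.list_map (Primrec.list_range.comp Primrec.snd)
          (hgetD.comp (Primrec.snd.comp (Primrec.fst.comp Primrec.fst)) Primrec.snd).to₂))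
      (Primrec.const 0))
    (hgetD.comp (Primrec.snd.comp Primrec.fst) Primrec.snd))

end Aux

theorem stmt8 (H : Set (ℕ → Bool)) (d : ℕ) (A : TreeCode → List Bool)
    (hA : Computable A)
    (hAw : ∀ T : TreeCode, (A T).length = d + 1 ∧ ¬ Realizable H (branchSample T (A T))) :
    H ⊆ {f | ∀ T : TreeCode, ¬ Consistent f (branchSample T (A T))} ∧
      Eldim {f | ∀ T : TreeCode, ¬ Consistent f (branchSample T (A T))} ≤ (d : ℕ∞) ∧
      EffClosed {f | ∀ T : TreeCode, ¬ Consistent f (branchSample T (A T))} := by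
  refine ⟨?_, ?_, ?_⟩
  · intro f hf T hc
    exact (hAw T).2 ⟨f, hf, hc⟩
  · apply sInf_le
    refine ⟨d, ?_, rfl⟩
    refine ⟨A, hA, fun T => ⟨(hAw T).1, ?_⟩⟩
    rintro ⟨f, hf, hc⟩
    exact hf T hc
  · refine ⟨fun n => ((Encodable.decode (α := TreeCode) n).map (fun T => B T (A T))).getD
      [(0, true), (0, false)], ?_, ?_⟩
    · apply Computable.option_getD ?_ (Computable.const _)
      apply Computable.option_map Computable.decode
      exact Computable.to₂ ((B_primrec.to_comp).comp Computable.snd (hA.comp Computable.snd))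
    · ext f
      simp only [Set.mem_compl_iff, Set.mem_iUnion, Set.mem_setOf_eq, Cyl]
      constructor
      · intro hf
        push_neg at hf
        obtain ⟨T, hT⟩ := hf
        refine ⟨Encodable.encode T, ?_⟩
        simp only [Encodable.encodek, Option.map_some, Option.getD_some, B_eq]
        exact hT
      · rintro ⟨n, hn⟩
        intro hf
        rcases hd : Encodable.decode (α := TreeCode) n with _ | T
        · rw [hd] at hn
          simp only [Option.map_none, Option.getD_none] at hn
          have h1 := hn (0, true) (by simp)
          have h2 := hn (0, false) (by simp)
          simp at h1 h2
          rw [h1] at h2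
          exact Bool.noConfusion h2
        · rw [hd] at hn
          simp only [Option.map_some, Option.getD_some, B_eq] at hn
          exact hf T hn
end

section
/- For any hypothesis class H, ⌊log₂ tdim(H)⌋ ≤ ldim(H), where tdim is the threshold dimension and ldim the Littlestone dimension. Equivalently, if H realizes all t+1 thresholds on some sequence (x₁,…,x_{t+1}), then ldim(H) ≥ ⌊log₂(t+1)⌋. -/
/-- The `i`-th threshold on `xs` (zero-indexed: the first `i` points labeled `0`,
the remaining points labeled `1`). -/
def threshold (xs : List ℕ) (i : ℕ) : Sample :=
  (xs.take i).map (fun x => (x, false)) ++ (xs.drop i).map (fun x => (x, true))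


/-- Value of a bit list read MSB-first, with bits negated. -/
def nval : List Bool → ℕ
  | [] => 0
  | b :: q => (cond b 0 1) * 2 ^ q.length + nval q

lemma nval_lt (q : List Bool) : nval q < 2 ^ q.length := by
  induction q with
  | nil => simp [nval]
  | cons b q ih =>
    have h2 : 2 ^ (b :: q).length = 2 ^ q.length * 2 := by
      simp [List.length_cons, pow_succ]
    cases b <;> simp [nval, h2] <;> omega

lemma nval_append (u v : List Bool) :
    nval (u ++ v) = nval u * 2 ^ v.length + nval v := by
  induction u with
  | nil => simp [nval]
  | cons b u ih =>
    simp [nval, ih, List.length_append, pow_add]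
    ring

/-- Index of the tree node at path `p` in a depth-`(d+1)` tree. -/
def idx (d : ℕ) (p : List Bool) : ℕ :=
  nval p * 2 ^ (d + 1 - p.length) + (2 ^ (d - p.length) - 1)

/-- All bool lists of length exactly `n`. -/
def listsOfLen : ℕ → List (List Bool)
  | 0 => [[]]
  | n + 1 => (listsOfLen n).flatMap fun l => [false :: l, true :: l]

lemma mem_listsOfLen (l : List Bool) : l ∈ listsOfLen l.length := by
  induction l with
  | nil => simp [listsOfLen]
  | cons b l ih =>
    simp only [List.length_cons, listsOfLen, List.mem_flatMap]
    exact ⟨l, ih, by cases b <;> simp⟩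

lemma lookup_map_self {α β : Type} [BEq α] [LawfulBEq α] (f : α → β) (L : List α) (p : α)
    (hp : p ∈ L) : (L.map fun a => (a, f a)).lookup p = some (f p) := by
  induction L with
  | nil => simp at hp
  | cons a L ih =>
    simp only [List.map_cons, List.lookup_cons]
    by_cases h : p = a
    · subst h; simp
    · have hb : (p == a) = false := beq_false_of_ne h
      rw [hb]
      exact ih (by rcases List.mem_cons.1 hp with h' | h' <;> [exact absurd h' h; exact h'])

lemma mem_threshold_of_lt (xs : List ℕ) (i k : ℕ) (hk : k < i) (hk2 : k < xs.length) :
    (xs.getD k 0, false) ∈ threshold xs i := by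
  unfold threshold
  apply List.mem_append_left
  have hk' : k < (xs.take i).length := by simp [List.length_take]; omega
  have heq : (xs.take i)[k] = xs.getD k 0 := by
    rw [List.getElem_take, List.getD_eq_getElem _ _ hk2]
  have := List.mem_map_of_mem (f := fun x => (x, false)) (List.getElem_mem hk')
  rwa [heq] at this

lemma mem_threshold_of_ge (xs : List ℕ) (i k : ℕ) (hk : i ≤ k) (hk2 : k < xs.length) :
    (xs.getD k 0, true) ∈ threshold xs i := by
  unfold threshold
  apply List.mem_append_right
  have hk' : k - i < (xs.drop i).length := by simp [List.length_drop]; omega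
  have heq : (xs.drop i)[k - i] = xs.getD k 0 := by
    rw [List.getElem_drop, List.getD_eq_getElem _ _ hk2]
    congr 1; omega
  have := List.mem_map_of_mem (f := fun x => (x, true)) (List.getElem_mem hk')
  rwa [heq] at this

theorem stmt10 (H : Set (ℕ → Bool)) (t : ℕ) (xs : List ℕ) (hlen : xs.length = t + 1)
    (hre : ∀ i < t + 1, Realizable H (threshold xs i)) :
    (Nat.log 2 (t + 1) : ℕ∞) ≤ Ldim H := by
  have hpos : (0:ℕ) < t + 1 := Nat.succ_pos t
  rw [Ldim]
  apply le_sInf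
  rintro b ⟨d, hd, rfl⟩
  simp only [Set.mem_setOf_eq] at hd
  rw [Nat.cast_le]
  by_contra hlog
  push_neg at hlog
  have hpow : 2 ^ (d + 1) ≤ t + 1 := by
    calc 2 ^ (d + 1) ≤ 2 ^ (Nat.log 2 (t + 1)) := Nat.pow_le_pow_right (by norm_num) hlog
    _ ≤ t + 1 := Nat.pow_log_le_self 2 (by omega)
  -- build the tree
  set T : TreeCode :=
    ((List.range (d + 1)).flatMap listsOfLen).map fun p => (p, xs.getD (idx d p) 0) with hT
  obtain ⟨p, hplen, hnr⟩ := hd T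
  apply hnr
  -- the threshold index for this branch
  have hnvp : nval p < 2 ^ (d + 1) := hplen ▸ nval_lt p
  obtain ⟨f, hfH, hfc⟩ := hre (nval p) (by omega)
  refine ⟨f, hfH, ?_⟩
  intro pr hpr
  rw [branchSample, List.mem_map] at hpr
  obtain ⟨i, hi, rfl⟩ := hpr
  rw [List.mem_range, hplen] at hi
  -- node label at p.take i
  have htlen : (p.take i).length = i := by rw [List.length_take]; omega
  have hmem : p.take i ∈ (List.range (d + 1)).flatMap listsOfLen := by
    rw [List.mem_flatMap]
    refine ⟨i, List.mem_range.2 hi, ?_⟩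
    have := mem_listsOfLen (p.take i)
    rwa [htlen] at this
  have hnl : nodeLabel T (p.take i) = xs.getD (idx d (p.take i)) 0 := by
    have hl : List.lookup (p.take i) T = some (xs.getD (idx d (p.take i)) 0) :=
      lookup_map_self (fun q => xs.getD (idx d q) 0) _ _ hmem
    rw [nodeLabel, hl]; rfl
  rw [hnl]
  -- arithmetic setup
  have hA : nval (p.take i) < 2 ^ i := by
    have := nval_lt (p.take i); rwa [htlen] at this
  have hsplit : nval p = nval (p.take i) * 2 ^ (d + 1 - i) + nval (p.drop i) := by
    conv_lhs => rw [← List.take_append_drop i p]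
    rw [nval_append, List.length_drop, hplen]
  have hip : i < p.length := by omega
  have hdrop : p.drop i = p[i] :: p.drop (i + 1) := List.drop_eq_getElem_cons hip
  have hdlen : (p.drop (i + 1)).length = d - i := by rw [List.length_drop, hplen]; omega
  have hnd : nval (p.drop i) = (cond p[i] 0 1) * 2 ^ (d - i) + nval (p.drop (i + 1)) := by
    rw [hdrop, nval, hdlen]
  have hnd2 : nval (p.drop (i + 1)) < 2 ^ (d - i) := by
    have := nval_lt (p.drop (i + 1)); rwa [hdlen] at this
  have hgetD : p.getD i false = p[i] := List.getD_eq_getElem p false hip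
  have hidx : idx d (p.take i) = nval (p.take i) * 2 ^ (d + 1 - i) + (2 ^ (d - i) - 1) := by
    rw [idx, htlen]
  have hpow1 : (0:ℕ) < 2 ^ (d - i) := Nat.pow_pos (by norm_num)
  have hmul : nval (p.take i) * 2 ^ (d + 1 - i) + 2 ^ (d + 1 - i) ≤ 2 ^ (d + 1) := by
    have h1 : (nval (p.take i) + 1) * 2 ^ (d + 1 - i) ≤ 2 ^ i * 2 ^ (d + 1 - i) :=
      Nat.mul_le_mul_right _ hA
    rw [add_mul, one_mul, ← pow_add] at h1
    have : i + (d + 1 - i) = d + 1 := by omega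
    rw [this] at h1
    omega
  have hpow2 : 2 ^ (d - i) ≤ 2 ^ (d + 1 - i) := Nat.pow_le_pow_right (by norm_num) (by omega)
  have hbound : idx d (p.take i) < xs.length := by
    rw [hidx, hlen]; omega
  -- case split on the bit
  rw [hgetD]
  cases hb : p[i] with
  | false =>
    have hlt : idx d (p.take i) < nval p := by
      rw [hidx, hsplit, hnd, hb]; simp; omega
    exact hfc _ (mem_threshold_of_lt xs (nval p) _ hlt hbound)
  | true =>
    have hge : nval p ≤ idx d (p.take i) := by
      rw [hidx, hsplit, hnd, hb]; simp; omega
    exact hfc _ (mem_threshold_of_ge xs (nval p) _ hge hbound)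
end

section
/- Let H be a hypothesis class of finite positive effective Littlestone dimension d, and let x ∈ ℕ. Then at least one of the classes H⁰ₓ = {f ∈ H : f(x) = 0} and H¹ₓ = {f ∈ H : f(x) = 1} has effective Littlestone dimension at most d − 1. -/
def comp2 (x : ℕ) (T₀ T₁ : TreeCode) : TreeCode :=
  ([], x) :: (T₀.map (fun pr => (false :: pr.1, pr.2)) ++ T₁.map (fun pr => (true :: pr.1, pr.2)))

lemma lookup_map_cons (b : Bool) (T : TreeCode) (p : List Bool) :
    (T.map fun pr => (b :: pr.1, pr.2)).lookup (b :: p) = T.lookup p := by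
  induction T with
  | nil => rfl
  | cons a t ih => simp [List.lookup, ih]

lemma lookup_map_ne (b b' : Bool) (h : b ≠ b') (T : TreeCode) (p : List Bool) :
    (T.map fun pr => (b' :: pr.1, pr.2)).lookup (b :: p) = none := by
  induction T with
  | nil => rfl
  | cons a t ih => simp [List.lookup, ih, Bool.beq_eq_decide_eq, h]

lemma lookup_append (l₁ l₂ : TreeCode) (k : List Bool) :
    (l₁ ++ l₂).lookup k = ((l₁.lookup k).or (l₂.lookup k)) := by
  induction l₁ with
  | nil => rfl
  | cons a t ih =>
    by_cases h : k == a.1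
    · simp [List.lookup, h]
    · simp [List.lookup, h, ih]

lemma nodeLabel_comp2_nil (x : ℕ) (T₀ T₁ : TreeCode) :
    nodeLabel (comp2 x T₀ T₁) [] = x := rfl

lemma nodeLabel_comp2_cons (x : ℕ) (T₀ T₁ : TreeCode) (b : Bool) (p : List Bool) :
    nodeLabel (comp2 x T₀ T₁) (b :: p) = nodeLabel (if b then T₁ else T₀) p := by
  unfold nodeLabel comp2
  rw [List.lookup]
  have : ((b :: p) == ([] : List Bool)) = false := rfl
  rw [this, lookup_append]
  cases b
  · rw [lookup_map_cons, lookup_map_ne false true (by simp)]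
    simp
  · rw [lookup_map_cons, lookup_map_ne true false (by simp)]
    simp

lemma branchSample_comp2 (x : ℕ) (T₀ T₁ : TreeCode) (b : Bool) (p : List Bool) :
    branchSample (comp2 x T₀ T₁) (b :: p)
      = (x, b) :: branchSample (if b then T₁ else T₀) p := by
  unfold branchSample
  rw [List.length_cons, List.range_succ_eq_map, List.map_cons, List.map_map]
  refine congrArg₂ List.cons ?_ ?_
  · simp [nodeLabel_comp2_nil]
  · apply List.map_congr_left
    intro i _
    simp only [Function.comp_apply, List.take_succ_cons, List.getD_cons_succ]
    rw [nodeLabel_comp2_cons]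


lemma Eldim_le_of {H' : Set (ℕ → Bool)} {k : ℕ} (h : EldimLe H' k) : Eldim H' ≤ (k : ℕ∞) :=
  sInf_le ⟨k, h, rfl⟩

lemma eldimLe_of_eldim_eq {H : Set (ℕ → Bool)} {d : ℕ} (hd : Eldim H = (d : ℕ∞)) :
    EldimLe H d := by
  have hne : {k : ℕ | EldimLe H k}.Nonempty := by
    by_contra h
    rw [Set.not_nonempty_iff_eq_empty] at h
    rw [Eldim, h, Set.image_empty, sInf_empty] at hd
    exact (by simp : ((⊤ : ℕ∞) ≠ (d : ℕ∞))) hd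
  have hm : EldimLe H (sInf {k : ℕ | EldimLe H k}) := Nat.sInf_mem hne
  have hcast : ((sInf {k : ℕ | EldimLe H k} : ℕ) : ℕ∞) = (d : ℕ∞) := by
    rw [← hd, Eldim]
    apply le_antisymm
    · exact le_sInf (by rintro b ⟨k, hk, rfl⟩; exact_mod_cast Nat.sInf_le hk)
    · exact sInf_le ⟨_, hm, rfl⟩
  rwa [Nat.cast_inj.mp hcast] at hm

lemma not_realizable_cons {H : Set (ℕ → Bool)} {x : ℕ} {b : Bool} {S : Sample}
    (h : ¬ Realizable H ((x, b) :: S)) : ¬ Realizable {f ∈ H | f x = b} S := by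
  rintro ⟨f, ⟨hfH, hfx⟩, hc⟩
  refine h ⟨f, hfH, ?_⟩
  intro p hp
  rcases List.mem_cons.mp hp with h' | h'
  · subst h'; exact hfx
  · exact hc p h'

def decT (n : ℕ) : TreeCode := (Encodable.decode (α := TreeCode) n).getD []

lemma primrec_decT : Primrec decT :=
  Primrec.option_getD.comp Primrec.decode (Primrec.const [])

lemma primrec_comp2 (x : ℕ) : Primrec₂ (comp2 x) := by
  have h1 : Primrec fun p : TreeCode × TreeCode =>
      p.1.map (fun pr => (false :: pr.1, pr.2)) :=
    Primrec.list_map Primrec.fst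
      (((Primrec.list_cons.comp (Primrec.const false) (Primrec.fst.comp Primrec.snd)).pair
        (Primrec.snd.comp Primrec.snd)))
  have h2 : Primrec fun p : TreeCode × TreeCode =>
      p.2.map (fun pr => (true :: pr.1, pr.2)) :=
    Primrec.list_map Primrec.snd
      (((Primrec.list_cons.comp (Primrec.const true) (Primrec.fst.comp Primrec.snd)).pair
        (Primrec.snd.comp Primrec.snd)))
  exact Primrec.list_cons.comp (Primrec.const ([], x)) (Primrec.list_append.comp h1 h2)

theorem stmt11 (H : Set (ℕ → Bool)) (d : ℕ) (hpos : 0 < d) (hd : Eldim H = (d : ℕ∞)) (x : ℕ) :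
    Eldim {f ∈ H | f x = false} ≤ ((d - 1 : ℕ) : ℕ∞) ∨
      Eldim {f ∈ H | f x = true} ≤ ((d - 1 : ℕ) : ℕ∞) := by
  obtain ⟨A, hA, hAspec⟩ := eldimLe_of_eldim_eq hd
  -- the search predicate
  set q : TreeCode → ℕ → Bool := fun T₀ n => !(A (comp2 x T₀ (decT n))).headI with hq_def
  have hinner : Primrec fun p : TreeCode × ℕ => comp2 x p.1 (decT p.2) :=
    (primrec_comp2 x).comp Primrec.fst (primrec_decT.comp Primrec.snd)
  have hAcomp : Computable fun p : TreeCode × ℕ => A (comp2 x p.1 (decT p.2)) :=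
    hA.comp hinner.to_comp
  have hq : Computable₂ q :=
    (Primrec.not.comp Primrec.list_headI).to_comp.comp hAcomp
  -- key fact: a nonempty output list
  have hlen : ∀ T : TreeCode, (A T).length = d + 1 := fun T => (hAspec T).1
  by_cases hcase : ∀ T₀ : TreeCode, ∃ n, q T₀ n = true
  · -- left branch: search for a witness tree T₁
    left
    apply Eldim_le_of
    classical
    refine ⟨fun T₀ => (A (comp2 x T₀ (decT (Nat.find (hcase T₀))))).tail, ?_, ?_⟩
    · -- computability via rfind
      have hg : Computable₂ fun (T₀ : TreeCode) (n : ℕ) =>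
          (A (comp2 x T₀ (decT n))).tail :=
        Primrec.list_tail.to_comp.comp hAcomp
      have hF : Partrec fun T₀ : TreeCode =>
          (Nat.rfind (fun n => (q T₀ n : Part Bool))).map
            (fun n => (A (comp2 x T₀ (decT n))).tail) :=
        (Partrec.rfind hq.partrec₂).map hg
      apply hF.of_eq_tot
      intro T₀
      apply Part.mem_map
      refine Nat.mem_rfind.mpr ?_
      constructor
      · exact Part.mem_some_iff.mpr (Nat.find_spec (hcase T₀)).symm
      · intro m hm
        refine Part.mem_some_iff.mpr ?_
        cases h' : q T₀ m
        · rfl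
        · exact absurd h' (Nat.find_min (hcase T₀) hm)
    · intro T₀
      set n := Nat.find (hcase T₀) with hn
      have hspec := hAspec (comp2 x T₀ (decT n))
      have hqn : q T₀ n = true := Nat.find_spec (hcase T₀)
      cases hAC : A (comp2 x T₀ (decT n)) with
      | nil => exfalso; rw [hAC] at hspec; simp at hspec
      | cons b t =>
        have hb : b = false := by
          rw [hq_def] at hqn
          simp only [hAC, List.headI, Bool.not_eq_true'] at hqn
          exact hqn
        subst hb
        have hlt : t.length = (d - 1) + 1 := by
          have := hspec.1
          rw [hAC] at this
          simp at this
          omega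
        have hnr := hspec.2
        rw [hAC, branchSample_comp2] at hnr
        simp only [if_neg (Bool.false_ne_true)] at hnr
        have htail : (A (comp2 x T₀ (decT n))).tail = t := by rw [hAC, List.tail_cons]
        refine ⟨?_, ?_⟩
        · show (A (comp2 x T₀ (decT n))).tail.length = d - 1 + 1
          rw [htail]; exact hlt
        · show ¬ Realizable _ (branchSample T₀ (A (comp2 x T₀ (decT n))).tail)
          rw [htail]
          exact not_realizable_cons hnr
  · -- right branch: a fixed T₀ works for every T₁
    right
    apply Eldim_le_of
    push_neg at hcase
    obtain ⟨T₀, hT₀⟩ := hcase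
    refine ⟨fun T₁ => (A (comp2 x T₀ T₁)).tail, ?_, ?_⟩
    · exact Primrec.list_tail.to_comp.comp
        (hA.comp ((primrec_comp2 x).comp (Primrec.const T₀) Primrec.id).to_comp)
    · intro T₁
      have hqn : q T₀ (Encodable.encode T₁) ≠ true := hT₀ (Encodable.encode T₁)
      have hdec : decT (Encodable.encode T₁) = T₁ := by
        simp [decT, Encodable.encodek]
      rw [hq_def] at hqn
      simp only [hdec] at hqn
      have hspec := hAspec (comp2 x T₀ T₁)
      cases hAC : A (comp2 x T₀ T₁) with
      | nil => exfalso; rw [hAC] at hspec; simp at hspec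
      | cons b t =>
        have hb : b = true := by
          rw [hAC] at hqn
          simpa using hqn
        subst hb
        have hlt : t.length = (d - 1) + 1 := by
          have := hspec.1
          rw [hAC] at this
          simp at this
          omega
        have hnr := hspec.2
        rw [hAC, branchSample_comp2] at hnr
        simp only [if_pos rfl] at hnr
        have htail : (A (comp2 x T₀ T₁)).tail = t := by rw [hAC, List.tail_cons]
        refine ⟨?_, ?_⟩
        · show (A (comp2 x T₀ T₁)).tail.length = d - 1 + 1
          rw [htail]; exact hlt
        · show ¬ Realizable _ (branchSample T₁ (A (comp2 x T₀ T₁)).tail)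
          rw [htail]
          exact not_realizable_cons hnr
end

section
/- Let H be a hypothesis class with finite effective Littlestone dimension d, witnessed by a total computable function A on depth-(d+1) Littlestone trees. Suppose f ∈ H, the sample S is consistent with f and with no other function of H, and H is effectively closed. Then f is computable. -/
/-! ### Auxiliary machinery for `stmt13` -/

namespace Stmt13Aux

open Primrec in
/-- Default-valued lookup in an association list. -/
def lookupD (m : List (ℕ × Bool)) (k : ℕ) : Bool :=
  m.foldr (fun q r => if q.1 = k then q.2 else r) false

/-- `m` (viewed as a partial assignment) is consistent with the sample `T`. -/
def cw (m : List (ℕ × Bool)) (T : Sample) : Bool :=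
  T.foldr (fun p b => decide (lookupD m p.1 = p.2) && b) true

/-- All Boolean assignments on the coordinate list `l`, as association lists. -/
def asg (l : List ℕ) : List (List (ℕ × Bool)) :=
  l.foldr (fun a ms => ms.flatMap fun m => [(a, true) :: m, (a, false) :: m]) [[]]

/-- All coordinates mentioned in `T` and in members of `L`. -/
def coords (T : Sample) (L : List Sample) : List ℕ :=
  T.map Prod.fst ++ (L.map fun U => U.map Prod.fst).flatten

/-- `m` is consistent with some member of `L`. -/
def anyCw (m : List (ℕ × Bool)) (L : List Sample) : Bool :=
  L.foldr (fun U c => cw m U || c) false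

/-- Decides whether `Cyl T ⊆ ⋃ U ∈ L, Cyl U`. -/
def covers (T : Sample) (L : List Sample) : Bool :=
  (asg (coords T L)).foldr (fun m b => (!(cw m T) || anyCw m L) && b) true

theorem foldr_and_eq_true {β : Type*} (q : β → Bool) (l : List β) :
    l.foldr (fun x b => q x && b) true = true ↔ ∀ x ∈ l, q x = true := by
  induction l with
  | nil => simp
  | cons a l ih => simp [ih]

theorem foldr_or_eq_true {β : Type*} (q : β → Bool) (l : List β) :
    l.foldr (fun x b => q x || b) false = true ↔ ∃ x ∈ l, q x = true := by
  induction l with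
  | nil => simp
  | cons a l ih => simp [ih]

theorem cw_iff {m : List (ℕ × Bool)} {T : Sample} :
    cw m T = true ↔ ∀ p ∈ T, lookupD m p.1 = p.2 := by
  unfold cw
  rw [foldr_and_eq_true]
  simp

theorem anyCw_iff {m : List (ℕ × Bool)} {L : List Sample} :
    anyCw m L = true ↔ ∃ U ∈ L, cw m U = true := by
  unfold anyCw
  rw [foldr_or_eq_true]

theorem covers_iff' {T : Sample} {L : List Sample} :
    covers T L = true ↔
      ∀ m ∈ asg (coords T L), cw m T = true → ∃ U ∈ L, cw m U = true := by
  unfold covers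
  rw [foldr_and_eq_true]
  simp only [Bool.or_eq_true, Bool.not_eq_true']
  constructor
  · intro h m hm hc
    rcases h m hm with h' | h'
    · simp [hc] at h'
    · exact anyCw_iff.1 h'
  · intro h m hm
    by_cases hc : cw m T = true
    · exact Or.inr (anyCw_iff.2 (h m hm hc))
    · exact Or.inl (by simpa using hc)

/-- The assignment induced by `h` on the coordinates `l`. -/
def mOf (l : List ℕ) (h : ℕ → Bool) : List (ℕ × Bool) :=
  l.map fun k => (k, h k)

theorem lookupD_mOf {h : ℕ → Bool} {l : List ℕ} {a : ℕ} (ha : a ∈ l) :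
    lookupD (mOf l h) a = h a := by
  induction l with
  | nil => simp at ha
  | cons k l ih =>
    rcases List.mem_cons.1 ha with rfl | ha'
    · simp [mOf, lookupD]
    · by_cases hk : k = a
      · subst hk; simp [mOf, lookupD]
      · have := ih ha'
        simpa [mOf, lookupD, hk] using this

theorem mOf_mem_asg (l : List ℕ) (h : ℕ → Bool) : mOf l h ∈ asg l := by
  induction l with
  | nil => simp [mOf, asg]
  | cons a l ih =>
    have : mOf (a :: l) h = (a, h a) :: mOf l h := rfl
    rw [this]
    show _ ∈ (asg l).flatMap fun m => [(a, true) :: m, (a, false) :: m]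
    rw [List.mem_flatMap]
    exact ⟨mOf l h, ih, by cases hha : h a <;> simp [hha]⟩

theorem mem_coords_left {p : ℕ × Bool} {T : Sample} (L : List Sample) (hp : p ∈ T) :
    p.1 ∈ coords T L := by
  simp only [coords, List.mem_append]
  exact Or.inl (List.mem_map.2 ⟨p, hp, rfl⟩)

theorem mem_coords_right {p : ℕ × Bool} {T : Sample} {L : List Sample} {U : Sample}
    (hU : U ∈ L) (hp : p ∈ U) : p.1 ∈ coords T L := by
  simp only [coords, List.mem_append]
  refine Or.inr (List.mem_flatten.2 ⟨U.map Prod.fst, List.mem_map.2 ⟨U, hU, rfl⟩, ?_⟩)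
  exact List.mem_map.2 ⟨p, hp, rfl⟩

theorem covers_eq_true_iff (T : Sample) (L : List Sample) :
    covers T L = true ↔ Cyl T ⊆ ⋃ U ∈ L, Cyl U := by
  rw [covers_iff']
  constructor
  · intro hc h hh
    have hm := mOf_mem_asg (coords T L) h
    have hcwT : cw (mOf (coords T L) h) T = true := by
      rw [cw_iff]
      intro p hp
      rw [lookupD_mOf (mem_coords_left L hp)]
      exact hh p hp
    obtain ⟨U, hU, hcwU⟩ := hc _ hm hcwT
    refine Set.mem_iUnion₂.2 ⟨U, hU, ?_⟩
    intro p hp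
    have := cw_iff.1 hcwU p hp
    rwa [lookupD_mOf (mem_coords_right hU hp)] at this
  · intro hc m _ hcwT
    have hmem : lookupD m ∈ Cyl T := fun p hp => cw_iff.1 hcwT p hp
    obtain ⟨U, hU, hmemU⟩ := Set.mem_iUnion₂.1 (hc hmem)
    exact ⟨U, hU, cw_iff.2 fun p hp => hmemU p hp⟩

/-! #### Topology of cylinders -/

theorem cyl_nil : Cyl ([] : Sample) = Set.univ := by
  ext h; simp [Cyl, Consistent]

theorem cyl_cons (p : ℕ × Bool) (T : Sample) :
    Cyl (p :: T) = {h : ℕ → Bool | h p.1 = p.2} ∩ Cyl T := by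
  ext h
  simp [Cyl, Consistent]

theorem isClosed_cyl (T : Sample) : IsClosed (Cyl T) := by
  induction T with
  | nil => rw [cyl_nil]; exact isClosed_univ
  | cons p T ih =>
    rw [cyl_cons]
    exact (isClosed_eq (continuous_apply p.1) continuous_const).inter ih

theorem isOpen_cyl (T : Sample) : IsOpen (Cyl T) := by
  induction T with
  | nil => rw [cyl_nil]; exact isOpen_univ
  | cons p T ih =>
    rw [cyl_cons]
    refine IsOpen.inter ?_ ih
    have : {h : ℕ → Bool | h p.1 = p.2} = (fun h : ℕ → Bool => h p.1) ⁻¹' {p.2} := by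
      ext h; simp
    rw [this]
    exact (isOpen_discrete _).preimage (continuous_apply p.1)

/-! #### Computability of `covers` -/

open Primrec

theorem primrec_lookupD : Primrec₂ lookupD := by
  have : Primrec fun a : List (ℕ × Bool) × ℕ =>
      a.1.foldr (fun (b : ℕ × Bool) (s : Bool) =>
        (fun (x : (List (ℕ × Bool) × ℕ) × (ℕ × Bool) × Bool) =>
          if x.2.1.1 = x.1.2 then x.2.1.2 else x.2.2) (a, (b, s))) false :=
    list_foldr fst (const false) <| Primrec.ite
      (Primrec.eq.comp (fst.comp (fst.comp snd)) (snd.comp fst))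
      (snd.comp (fst.comp snd)) (snd.comp snd) |>.to₂
  exact this.of_eq fun a => rfl

theorem hband : Primrec₂ (fun a b : Bool => a && b) :=
  Primrec.dom_finite (fun p : Bool × Bool => p.1 && p.2)

theorem hbor : Primrec₂ (fun a b : Bool => a || b) :=
  Primrec.dom_finite (fun p : Bool × Bool => p.1 || p.2)

theorem hbnot : Primrec (fun b : Bool => !b) := Primrec.dom_finite _

theorem primrec_cw : Primrec₂ cw := by
  have hdec : Primrec fun x : (List (ℕ × Bool) × Sample) × (ℕ × Bool) × Bool =>
      decide (lookupD x.1.1 x.2.1.1 = x.2.1.2) :=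
    (Primrec.eq.comp (primrec_lookupD.comp (fst.comp fst) (fst.comp (fst.comp snd)))
      (snd.comp (fst.comp snd))).decide
  have h := list_foldr (snd : Primrec fun a : List (ℕ × Bool) × Sample => a.2)
    (const true) (hband.comp hdec (snd.comp snd)).to₂
  exact h.of_eq fun a => rfl

theorem primrec_asg : Primrec asg := by
  have inner : Primrec₂ fun (x : List ℕ × ℕ × List (List (ℕ × Bool)))
      (m : List (ℕ × Bool)) => [(x.2.1, true) :: m, (x.2.1, false) :: m] := by
    have ha : Primrec fun y : (List ℕ × ℕ × List (List (ℕ × Bool))) × List (ℕ × Bool) =>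
        y.1.2.1 := fst.comp (snd.comp fst)
    exact (list_cons.comp
      (list_cons.comp (Primrec.pair ha (const true)) snd)
      (list_cons.comp (list_cons.comp (Primrec.pair ha (const false)) snd)
        (const []))).to₂
  have hh : Primrec₂ fun (x : List ℕ) (p : ℕ × List (List (ℕ × Bool))) =>
      p.2.flatMap fun m => [(p.1, true) :: m, (p.1, false) :: m] :=
    (list_flatMap (snd.comp snd) inner).to₂
  have h := list_foldr (Primrec.id : Primrec fun l : List ℕ => l) (const [[]]) hh
  exact h.of_eq fun l => rfl

theorem primrec_coords : Primrec₂ coords := by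
  have part1 : Primrec fun x : Sample × List Sample => x.1.map Prod.fst :=
    list_map fst ((fst.comp snd).to₂)
  have inner : Primrec fun x : Sample × List Sample =>
      x.2.map fun U => U.map Prod.fst :=
    list_map snd ((list_map snd ((fst.comp snd).to₂)).to₂)
  have h : Primrec fun x : Sample × List Sample =>
      x.1.map Prod.fst ++ (x.2.map fun U => U.map Prod.fst).flatten :=
    list_append.comp part1 (list_flatten.comp inner)
  exact h.of_eq fun x => rfl

theorem primrec_anyCw : Primrec₂ anyCw := by
  have hh : Primrec₂ fun (x : List (ℕ × Bool) × List Sample) (p : Sample × Bool) =>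
      cw x.1 p.1 || p.2 :=
    (hbor.comp (primrec_cw.comp (fst.comp fst) (fst.comp snd)) (snd.comp snd)).to₂
  have h := list_foldr (snd : Primrec fun a : List (ℕ × Bool) × List Sample => a.2)
    (const false) hh
  exact h.of_eq fun a => rfl

theorem primrec_covers : Primrec₂ covers := by
  have hcoords : Primrec fun x : Sample × List Sample => coords x.1 x.2 := primrec_coords
  have hasg : Primrec fun x : Sample × List Sample => asg (coords x.1 x.2) :=
    primrec_asg.comp hcoords
  have hh : Primrec₂ fun (x : Sample × List Sample) (p : List (ℕ × Bool) × Bool) =>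
      ((!(cw p.1 x.1)) || anyCw p.1 x.2) && p.2 := by
    have cwT : Primrec fun y : (Sample × List Sample) × List (ℕ × Bool) × Bool =>
        cw y.2.1 y.1.1 := primrec_cw.comp (fst.comp snd) (fst.comp fst)
    have anyL : Primrec fun y : (Sample × List Sample) × List (ℕ × Bool) × Bool =>
        anyCw y.2.1 y.1.2 := primrec_anyCw.comp (fst.comp snd) (snd.comp fst)
    exact (hband.comp (hbor.comp (hbnot.comp cwT) anyL) (snd.comp snd)).to₂
  have h := list_foldr hasg (const true) hh
  exact h.of_eq fun a => rfl

/-! #### Assembling the algorithm -/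

theorem computable_rangeMap {g : ℕ → Sample} (hg : Computable g) :
    Computable fun n => (List.range n).map g := by
  have hh : Computable₂ fun (_ : ℕ) (p : ℕ × List Sample) => p.2 ++ [g p.1] := by
    have : Computable fun x : ℕ × ℕ × List Sample => x.2.2 ++ [g x.2.1] :=
      Primrec.list_append.to_comp.comp (Computable.snd.comp Computable.snd)
        (Primrec.list_cons.to_comp.comp (hg.comp (Computable.fst.comp Computable.snd))
          (Computable.const []))
    exact this.to₂
  have h := Computable.nat_rec Computable.id (Computable.const ([] : List Sample)) hh
  refine h.of_eq fun n => ?_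
  induction n with
  | zero => simp
  | succ k ih => simpa [List.range_succ] using congrArg (· ++ [g k]) ih

theorem consistent_append {f : ℕ → Bool} {S T : Sample} :
    Consistent f (S ++ T) ↔ Consistent f S ∧ Consistent f T := by
  simp [Consistent, or_imp, forall_and]

end Stmt13Aux

theorem stmt13 (H : Set (ℕ → Bool)) (d : ℕ) (A : TreeCode → List Bool)
    (hA : Computable A)
    (hAw : ∀ T : TreeCode, (A T).length = d + 1 ∧ ¬ Realizable H (branchSample T (A T)))
    (f : ℕ → Bool) (hf : f ∈ H) (S : Sample) (hS : Consistent f S)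
    (huniq : ∀ g ∈ H, Consistent g S → g = f)
    (hcl : EffClosed H) : Computable f := by
  classical
  obtain ⟨g, hg, hHc⟩ := hcl
  set P : ℕ → ℕ → Bool :=
    fun x n => Stmt13Aux.covers (S ++ [(x, n.bodd)]) ((List.range n).map g) with hP
  -- soundness of the search predicate
  have hsound : ∀ x n, P x n = true → n.bodd = !(f x) := by
    intro x n hpn
    have hsub : Cyl (S ++ [(x, n.bodd)]) ⊆ ⋃ U ∈ (List.range n).map g, Cyl U :=
      (Stmt13Aux.covers_eq_true_iff _ _).1 hpn
    have hsub2 : Cyl (S ++ [(x, n.bodd)]) ⊆ Hᶜ := by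
      intro h hh
      obtain ⟨U, hU, hmem⟩ := Set.mem_iUnion₂.1 (hsub hh)
      obtain ⟨m, _, rfl⟩ := List.mem_map.1 hU
      rw [Set.mem_compl_iff, ← Set.mem_compl_iff, hHc]
      exact Set.mem_iUnion.2 ⟨m, hmem⟩
    by_contra hne
    have hbodd : n.bodd = f x := by
      cases hb : n.bodd <;> cases hfx : f x <;> simp [hb, hfx] at hne ⊢
    have hfmem : f ∈ Cyl (S ++ [(x, n.bodd)]) := by
      show Consistent f (S ++ [(x, n.bodd)])
      rw [Stmt13Aux.consistent_append]
      refine ⟨hS, ?_⟩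
      intro p hp
      simp only [List.mem_singleton] at hp
      subst hp
      simpa using hbodd.symm
    exact hsub2 hfmem hf
  -- completeness of the search predicate
  have hex : ∀ x, ∃ n, P x n = true := by
    intro x
    have hT0 : Cyl (S ++ [(x, !(f x))]) ⊆ Hᶜ := by
      intro h hh
      rw [Set.mem_compl_iff]
      intro hhH
      have hhS : Consistent h S := (Stmt13Aux.consistent_append.1 hh).1
      have hhx : h x = !(f x) := by
        have := (Stmt13Aux.consistent_append.1 hh).2
        simpa [Consistent] using this
      rw [huniq h hhH hhS] at hhx
      simp at hhx
    rw [hHc] at hT0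
    obtain ⟨t, ht⟩ := ((Stmt13Aux.isClosed_cyl _).isCompact).elim_finite_subcover
      (fun m => Cyl (g m)) (fun m => Stmt13Aux.isOpen_cyl (g m)) hT0
    set k : ℕ := t.sup id + 1 with hk
    refine ⟨if f x then 2 * k else 2 * k + 1, ?_⟩
    set n := if f x then 2 * k else 2 * k + 1 with hn
    have hbodd : n.bodd = !(f x) := by
      cases hfx : f x <;> simp [hn, hfx, Nat.bodd_add, Nat.bodd_mul]
    have hkn : 2 * k ≤ n := by
      cases hfx : f x <;> simp [hn, hfx]
    show Stmt13Aux.covers (S ++ [(x, n.bodd)]) ((List.range n).map g) = true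
    rw [Stmt13Aux.covers_eq_true_iff, hbodd]
    intro h hh
    obtain ⟨i, hi, hmem⟩ := Set.mem_iUnion₂.1 (ht hh)
    have hik : i < n := by
      have h1 : i ≤ t.sup id := Finset.le_sup (f := id) hi
      omega
    exact Set.mem_iUnion₂.2 ⟨g i, List.mem_map.2 ⟨i, List.mem_range.2 hik, rfl⟩, hmem⟩
  -- computability of the search predicate
  have hPc : Computable₂ P := by
    have hA1 : Computable fun q : ℕ × ℕ => S ++ [(q.1, q.2.bodd)] :=
      Primrec.list_append.to_comp.comp (Computable.const S)
        (Primrec.list_cons.to_comp.comp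
          (Computable.pair Computable.fst (Primrec.nat_bodd.to_comp.comp Computable.snd))
          (Computable.const []))
    have hA2 : Computable fun q : ℕ × ℕ => (List.range q.2).map g :=
      (Stmt13Aux.computable_rangeMap hg).comp Computable.snd
    exact Stmt13Aux.primrec_covers.to_comp.comp hA1 hA2
  -- the algorithm: search for the least witness and flip its parity bit
  have hpart : Partrec fun x : ℕ =>
      (Nat.rfind fun n => Part.some (P x n)).map fun n => !n.bodd := by
    refine Partrec.map (Partrec.rfind hPc.partrec₂) ?_
    exact ((Stmt13Aux.hbnot.comp Primrec.nat_bodd).to_comp.comp Computable.snd).to₂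
  refine hpart.of_eq_tot fun x => ?_
  have hfind := Nat.find_spec (hex x)
  have hmem : Nat.find (hex x) ∈ Nat.rfind fun n => Part.some (P x n) := by
    rw [Nat.mem_rfind (p := fun n => Part.some (P x n))]
    constructor
    · simpa [Part.mem_some_iff] using hfind.symm
    · intro m hm
      rw [Part.mem_some_iff]
      exact (Bool.eq_false_iff.2 (Nat.find_min (hex x) hm)).symm
  have hfx : f x = !(Nat.find (hex x)).bodd := by
    rw [hsound x _ hfind]; simp
  rw [hfx]
  exact Part.mem_map _ hmem
end

section
/- Let H be an infinite, effectively closed hypothesis class of Littlestone dimension 1 such that for every x ∈ ℕ not both H⁰ₓ and H¹ₓ have Littlestone dimension 0; define f : ℕ → {0,1} by choosing f(x) with ldim(H^x_{f(x)}) = 1. Then f ∈ H. -/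
lemma ldimLe_of_ldim_eq {H : Set (ℕ → Bool)} {n : ℕ} (h : Ldim H = (n : ℕ∞)) :
    LdimLe H n := by
  set s := {d : ℕ | LdimLe H d} with hs
  have hne : s.Nonempty := by
    by_contra hemp
    rw [Set.not_nonempty_iff_eq_empty] at hemp
    rw [Ldim, ← hs, hemp, Set.image_empty, sInf_empty] at h
    exact (ENat.coe_lt_top n).ne h.symm
  have hm : sInf s ∈ s := Nat.sInf_mem hne
  have heq : Ldim H = ((sInf s : ℕ) : ℕ∞) := by
    apply le_antisymm
    · exact sInf_le ⟨_, hm, rfl⟩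
    · apply le_sInf
      rintro a ⟨d, hd, rfl⟩
      exact_mod_cast Nat.sInf_le hd
  rw [h] at heq
  have : n = sInf s := by exact_mod_cast heq
  rw [this]; exact hm

lemma not_ldimLe_of_ldim_eq {H : Set (ℕ → Bool)} {n d : ℕ} (h : Ldim H = (n : ℕ∞))
    (hd : d < n) : ¬ LdimLe H d := by
  intro hle
  have h1 : Ldim H ≤ (d : ℕ∞) := sInf_le ⟨d, hle, rfl⟩
  rw [h] at h1
  exact absurd (by exact_mod_cast h1) (not_le.mpr hd)

lemma branchSample_pair (T : TreeCode) (b0 b1 : Bool) :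
    branchSample T [b0, b1] = [(nodeLabel T [], b0), (nodeLabel T [b0], b1)] := rfl

lemma branchSample_single (T : TreeCode) (b : Bool) :
    branchSample T [b] = [(nodeLabel T [], b)] := rfl

lemma cons_pair {h : ℕ → Bool} {a b : ℕ} {c d : Bool} (h1 : h a = c) (h2 : h b = d) :
    Consistent h [(a, c), (b, d)] := by
  intro p hp
  simp only [List.mem_cons, List.not_mem_nil, or_false] at hp
  rcases hp with rfl | rfl <;> simpa

/-- Key lemma: if `LdimLe H 1` and the class of `h ∈ H` with `h x = b` does not have
Littlestone dimension 0, then the class with `h x = !b` is a subsingleton. -/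
lemma key (H : Set (ℕ → Bool)) (hld : LdimLe H 1) (x : ℕ) (b : Bool)
    (hb : ¬ LdimLe {g ∈ H | g x = b} 0) :
    {g ∈ H | g x = !b}.Subsingleton := by
  intro g0 hg0 g1 hg1
  by_contra hne
  obtain ⟨y, hy⟩ : ∃ y, g0 y ≠ g1 y := by
    by_contra hy; push_neg at hy; exact hne (funext hy)
  unfold LdimLe at hb
  push_neg at hb
  obtain ⟨T0, hT0⟩ := hb
  set z := nodeLabel T0 [] with hz
  have hreal : ∀ c : Bool, Realizable {g ∈ H | g x = b} [(z, c)] := by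
    intro c
    have h := hT0 [c] rfl
    rwa [branchSample_single] at h
  obtain ⟨h0, hh0, hc0⟩ := hreal false
  obtain ⟨h1, hh1, hc1⟩ := hreal true
  have h0z : h0 z = false := hc0 (z, false) (by simp)
  have h1z : h1 z = true := hc1 (z, true) (by simp)
  -- build the depth-2 tree
  obtain ⟨p, hlen, hnr⟩ := hld [([], x), ([b], z), ([!b], y)]
  obtain ⟨b0, b1, rfl⟩ : ∃ b0 b1, p = [b0, b1] := by
    rcases p with _ | ⟨b0, _ | ⟨b1, _ | ⟨c, t⟩⟩⟩
    · simp at hlen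
    · simp at hlen
    · exact ⟨b0, b1, rfl⟩
    · simp at hlen
  rw [branchSample_pair] at hnr
  apply hnr
  have hroot : nodeLabel [(([] : List Bool), x), ([b], z), ([!b], y)] [] = x := by
    cases b <;> simp [nodeLabel, List.lookup]
  rw [hroot]
  by_cases hb0 : b0 = b
  · -- go down the `b` branch: use h0 / h1
    have hnode : nodeLabel [(([] : List Bool), x), ([b], z), ([!b], y)] [b0] = z := by
      subst hb0; cases b0 <;> simp [nodeLabel, List.lookup]
    rw [hnode, hb0]
    cases b1
    · exact ⟨h0, hh0.1, cons_pair hh0.2 h0z⟩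
    · exact ⟨h1, hh1.1, cons_pair hh1.2 h1z⟩
  · -- go down the `!b` branch: use g0 / g1
    have hb0' : b0 = !b := by cases b <;> cases b0 <;> simp_all
    have hnode : nodeLabel [(([] : List Bool), x), ([b], z), ([!b], y)] [b0] = y := by
      subst hb0'; cases b <;> simp [nodeLabel, List.lookup]
    rw [hnode, hb0']
    rcases Bool.eq_false_or_eq_true (g0 y) with h | h
    · have h1y : g1 y = false := by
        cases hg1y : g1 y
        · rfl
        · exact absurd (h.trans hg1y.symm) hy
      cases b1
      · exact ⟨g1, hg1.1, cons_pair hg1.2 h1y⟩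
      · exact ⟨g0, hg0.1, cons_pair hg0.2 h⟩
    · have h1y : g1 y = true := by
        cases hg1y : g1 y
        · exact absurd (h.trans hg1y.symm) hy
        · rfl
      cases b1
      · exact ⟨g0, hg0.1, cons_pair hg0.2 h⟩
      · exact ⟨g1, hg1.1, cons_pair hg1.2 h1y⟩

theorem stmt16 (H : Set (ℕ → Bool)) (hinf : H.Infinite) (hcl : EffClosed H)
    (hld : Ldim H = 1)
    (hnb : ∀ x : ℕ, ¬ (Ldim {g ∈ H | g x = false} = 0 ∧ Ldim {g ∈ H | g x = true} = 0))
    (f : ℕ → Bool)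
    (hf : ∀ x : ℕ, Ldim {g ∈ H | g x = f x} = 1) : f ∈ H := by
  by_contra hfH
  obtain ⟨g, -, hgeq⟩ := hcl
  have hfc : f ∈ Hᶜ := hfH
  rw [hgeq] at hfc
  obtain ⟨_, ⟨N, rfl⟩, hfS⟩ := hfc
  set S := g N with hS
  have hfcons : Consistent f S := hfS
  have hnr : ¬ Realizable H S := by
    rintro ⟨h, hh, hc⟩
    have : h ∈ Hᶜ := by rw [hgeq]; exact Set.mem_iUnion.mpr ⟨N, hc⟩
    exact this hh
  have hld1 : LdimLe H 1 := ldimLe_of_ldim_eq (by exact_mod_cast hld)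
  have hsub : ∀ x, {g' ∈ H | g' x = !(f x)}.Subsingleton := fun x =>
    key H hld1 x (f x)
      (not_ldimLe_of_ldim_eq (n := 1) (by exact_mod_cast hf x) (by norm_num))
  have hcover : H ⊆ ⋃ p ∈ S.toFinset, {g' ∈ H | g' p.1 = !(f p.1)} := by
    intro g' hg'
    have hnc : ¬ Consistent g' S := fun hc => hnr ⟨g', hg', hc⟩
    unfold Consistent at hnc; push_neg at hnc
    obtain ⟨p, hpS, hpne⟩ := hnc
    refine Set.mem_biUnion (List.mem_toFinset.mpr hpS) ⟨hg', ?_⟩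
    have := hfcons p hpS
    cases hgp : g' p.1 <;> cases hfp : f p.1 <;> simp_all
  exact hinf ((Set.Finite.biUnion S.toFinset.finite_toSet
    (fun p _ => (hsub p.1).finite)).subset hcover)
end

section
/- There exists a hypothesis class H of effective Littlestone dimension 2 such that for every d ∈ ℕ, no partial computable online learner learns H with at most d mistakes. -/
/-- Number of sequential prediction mistakes of a partial learner on `S`:
indices where the true label is not the (defined) output of the learner. -/
noncomputable def pmistakes (L : Sample × ℕ →. Bool) (S : Sample) : ℕ :=
  {i | i < S.length ∧ (S.getD i (0, false)).2 ∉ L (S.take i, (S.getD i (0, false)).1)}.ncard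

namespace S18
open Nat.Partrec (Code)
open Nat.Partrec.Code Encodable Denumerable

abbrev Hist := List (Bool × ℕ)

/-- the point in column `c` (encoded as `c+1`) with history `h`. -/
def posn (c : ℕ) (h : Hist) : ℕ := Nat.pair (c+1) (encode h)

/-- the sample written along history `h` in column `c`. -/
def hsample (c : ℕ) (h : Hist) : Sample :=
  (List.range h.length).map fun j => (posn c (h.take j), (h.getD j (false,0)).1)

/-- encoded input to the learner at stage `h` of column `c`. -/
def inp (c : ℕ) (h : Hist) : ℕ := encode ((hsample c h, posn c h) : Sample × ℕ)

/-- `stageOK c h y t` : the `c`-th machine, on the stage input determined by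
history `h`, halts in exactly `t` steps with an output decoding to `!y`
(so that the contradicting label of this stage is `y`). -/
def stageOK (c : ℕ) (h : Hist) (y : Bool) (t : ℕ) : Bool :=
  (!(decide (t = 0))) &&
  ((evaln (t-1) (ofNat Code c) (inp c h)).isNone) &&
  (decide (((evaln t (ofNat Code c) (inp c h)).bind fun m => (decode m : Option Bool))
    = some (!y)))

/-- validity of a timestamped history. -/
def Vb (c : ℕ) (h : Hist) : Bool :=
  (List.range h.length).all fun j =>
    stageOK c (h.take j) (h.getD j (false,0)).1 (h.getD j (false,0)).2

/-- total decoding of histories -/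
def decodeHist (m : ℕ) : Hist := (decode (α := Hist) m).getD []

open Classical in
/-- The diagonal function of column `c`. -/
noncomputable def phi (c : ℕ) : ℕ → Bool := fun x =>
  decide (x.unpair.1 = c + 1 ∧ encode (decodeHist x.unpair.2) = x.unpair.2 ∧
    Vb c (decodeHist x.unpair.2) = true ∧
    ∃ t, stageOK c (decodeHist x.unpair.2) true t = true)

/-- gadget functions on column 0 shattering a depth-2 tree. -/
def gad (b0 b1 : Bool) : ℕ → Bool := fun x =>
  if x = Nat.pair 0 0 then b0
  else if x = Nat.pair 0 1 then b0 && b1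
  else if x = Nat.pair 0 2 then !b0 && b1
  else false

def Hset : Set (ℕ → Bool) :=
  {f | f = (fun _ => false) ∨ (∃ b0 b1, f = gad b0 b1) ∨ (∃ c, f = phi c)}

-- basic lemmas
lemma stageOK_uniq {c h y t y' t'} (h1 : stageOK c h y t = true)
    (h2 : stageOK c h y' t' = true) : y = y' ∧ t = t' := by
  simp only [stageOK, Bool.and_eq_true, Bool.not_eq_true', decide_eq_false_iff_not,
    decide_eq_true_eq, Option.isNone_iff_eq_none] at h1 h2
  obtain ⟨⟨ht0, hnone⟩, hsome⟩ := h1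
  obtain ⟨⟨ht0', hnone'⟩, hsome'⟩ := h2
  obtain ⟨m, hm, hdm⟩ := Option.bind_eq_some_iff.1 hsome
  obtain ⟨m', hm', hdm'⟩ := Option.bind_eq_some_iff.1 hsome'
  have htt : t = t' := by
    rcases lt_trichotomy t t' with hlt | heq | hlt
    · exfalso
      have : t ≤ t' - 1 := by omega
      have := evaln_mono this hm
      rw [hnone'] at this; exact absurd (Option.mem_def.1 this) (by simp)
    · exact heq
    · exfalso
      have : t' ≤ t - 1 := by omega
      have := evaln_mono this hm'
      rw [hnone] at this; exact absurd (Option.mem_def.1 this) (by simp)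
  subst htt
  rw [hm] at hm'
  have hmm : m = m' := Option.some.inj hm'
  subst hmm
  rw [hdm] at hdm'
  have := Option.some.inj hdm'
  exact ⟨by simpa using congrArg (!·) this, rfl⟩


lemma decodeHist_encode (h : Hist) : decodeHist (encode h) = h := by
  simp [decodeHist, encodek]

lemma posn_unpair1 (c : ℕ) (h : Hist) : (posn c h).unpair.1 = c + 1 := by
  simp [posn]

lemma posn_unpair2 (c : ℕ) (h : Hist) : (posn c h).unpair.2 = encode h := by
  simp [posn]

lemma phi_posn (c : ℕ) (h : Hist) :
    phi c (posn c h) = true ↔ (Vb c h = true ∧ ∃ t, stageOK c h true t = true) := by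
  simp [phi, posn_unpair1, posn_unpair2, decodeHist_encode]

lemma phi_eq_true_iff (c : ℕ) (x : ℕ) :
    phi c x = true ↔ (x.unpair.1 = c + 1 ∧ encode (decodeHist x.unpair.2) = x.unpair.2 ∧
      Vb c (decodeHist x.unpair.2) = true ∧
      ∃ t, stageOK c (decodeHist x.unpair.2) true t = true) := by
  simp [phi]

lemma phi_col {c : ℕ} {x : ℕ} (hx : x.unpair.1 ≠ c + 1) : phi c x = false := by
  rw [Bool.eq_false_iff]
  intro hc
  exact hx ((phi_eq_true_iff c x).1 hc).1

lemma phi_true_point {c : ℕ} {x : ℕ} (hx : phi c x = true) :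
    x = posn c (decodeHist x.unpair.2) := by
  obtain ⟨h1, h2, _⟩ := (phi_eq_true_iff c x).1 hx
  rw [posn, h2, ← h1, Nat.pair_unpair]

/-- membership of `Vb` unfolded -/
lemma Vb_iff (c : ℕ) (h : Hist) :
    Vb c h = true ↔ ∀ j < h.length,
      stageOK c (h.take j) (h.getD j (false,0)).1 (h.getD j (false,0)).2 = true := by
  simp [Vb, List.all_eq_true, List.mem_range]

lemma Vb_take {c : ℕ} {h : Hist} (hv : Vb c h = true) (j : ℕ) :
    Vb c (h.take j) = true := by
  rw [Vb_iff] at hv ⊢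
  intro i hi
  rw [List.length_take] at hi
  have hih : i < h.length := lt_of_lt_of_le hi (min_le_right _ _)
  have hij : i < j := lt_of_lt_of_le hi (min_le_left _ _)
  have := hv i hih
  simpa [List.getD_eq_getElem?_getD, List.getElem?_take, hij, List.take_take,
    min_eq_left hij.le] using this

lemma Vb_prefix_of_le {c : ℕ} {h h' : Hist} (hv : Vb c h = true) (hv' : Vb c h' = true)
    (hle : h.length ≤ h'.length) : h <+: h' := by
  have key : ∀ j, j ≤ h.length → h.take j = h'.take j := by
    intro j hj
    induction j with
    | zero => simp
    | succ k ih =>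
      have hk : k ≤ h.length := le_of_lt hj
      have hkh : k < h.length := hj
      have hkh' : k < h'.length := lt_of_lt_of_le hkh hle
      have e1 := (Vb_iff c h).1 hv k hkh
      have e2 := (Vb_iff c h').1 hv' k hkh'
      rw [← ih hk] at e2
      obtain ⟨hy, ht⟩ := stageOK_uniq e1 e2
      rw [List.take_succ, List.take_succ, ih hk]
      congr 1
      rw [List.getElem?_eq_getElem hkh, List.getElem?_eq_getElem hkh']
      have g1 : h.getD k (false,0) = h[k] := List.getD_eq_getElem h _ hkh
      have g2 : h'.getD k (false,0) = h'[k] := List.getD_eq_getElem h' _ hkh'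
      rw [g1, g2] at hy ht
      have : h[k] = h'[k] := Prod.ext hy ht
      rw [this]
  have := key h.length le_rfl
  simp only [List.take_length] at this
  rw [this]
  exact List.take_prefix _ _

/-- two valid histories are comparable. -/
lemma Vb_comp {c : ℕ} {h h' : Hist} (hv : Vb c h = true) (hv' : Vb c h' = true) :
    h <+: h' ∨ h' <+: h := by
  rcases le_total h.length h'.length with hle | hle
  · exact Or.inl (Vb_prefix_of_le hv hv' hle)
  · exact Or.inr (Vb_prefix_of_le hv' hv hle)

/-- the fundamental "reveal" lemma: a valid history determines the values of
`phi c` at all its proper prefixes. -/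
lemma reveal {c : ℕ} {h' : Hist} (hv' : Vb c h' = true) {j : ℕ} (hj : j < h'.length) :
    phi c (posn c (h'.take j)) = (h'.getD j (false,0)).1 := by
  have hstage := (Vb_iff c h').1 hv' j hj
  by_cases hy : (h'.getD j (false,0)).1 = true
  · rw [hy]
    rw [phi_posn]
    refine ⟨Vb_take hv' j, ⟨(h'.getD j (false,0)).2, ?_⟩⟩
    rw [hy] at hstage; exact hstage
  · have hy' : (h'.getD j (false,0)).1 = false := by
      cases hyy : (h'.getD j (false,0)).1
      · rfl
      · exact absurd hyy hy
    rw [hy']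
    rw [Bool.eq_false_iff]
    intro hcon
    obtain ⟨_, t, hst⟩ := (phi_posn c _).1 hcon
    have := (stageOK_uniq hst hstage).1
    rw [hy'] at this
    exact Bool.noConfusion this


/-! ### The algorithm -/

def gadAns (p0 p1 qt qf : ℕ) : Bool × Bool :=
  (([((true:Bool),(true:Bool)),(true,false),(false,true),(false,false)]).find? fun pr =>
     ([((true:Bool),(false:Bool)),(true,true),(false,true)]).all fun g =>
       !(gad g.1 g.2 p0) ||
       !(decide (gad g.1 g.2 p1 = pr.1) &&
         decide (gad g.1 g.2 (if pr.1 then qt else qf) = pr.2))).getD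
    (true,true)

def colOK (c0 x : ℕ) : Bool :=
  (decide (x.unpair.1 = c0)) && (decide (encode (decodeHist x.unpair.2) = x.unpair.2))

def prefB (a b : Hist) : Bool := decide (b.take a.length = a)

def mainF (p0 p1 qt qf : ℕ) : Bool × Bool :=
  if p0.unpair.1 = 0 then gadAns p0 p1 qt qf
  else if colOK p0.unpair.1 p1 = false then (true, true)
  else if decodeHist p1.unpair.2 = decodeHist p0.unpair.2 then (false, true)
  else if prefB (decodeHist p1.unpair.2) (decodeHist p0.unpair.2) then
    (!((decodeHist p0.unpair.2).getD (decodeHist p1.unpair.2).length (false,0)).1, true)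
  else if prefB (decodeHist p0.unpair.2) (decodeHist p1.unpair.2) then
    if ((decodeHist p1.unpair.2).getD (decodeHist p0.unpair.2).length (false,0)).1 = false then
      (true,true)
    else if colOK p0.unpair.1 qt = false then (true, true)
    else if decodeHist qt.unpair.2 = decodeHist p1.unpair.2 then (true, false)
    else if prefB (decodeHist qt.unpair.2) (decodeHist p1.unpair.2) then
      (true, !((decodeHist p1.unpair.2).getD (decodeHist qt.unpair.2).length (false,0)).1)
    else if prefB (decodeHist p1.unpair.2) (decodeHist qt.unpair.2) then
      if Vb (p0.unpair.1 - 1) (decodeHist qt.unpair.2)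
         && ((decodeHist qt.unpair.2).getD (decodeHist p1.unpair.2).length (false,0)).1 then
        (false, false)
      else (true, true)
    else (true, true)
  else (true, true)

def Algo (T : TreeCode) : List Bool :=
  [true,
   (mainF (nodeLabel T []) (nodeLabel T [true]) (nodeLabel T [true,true])
      (nodeLabel T [true,false])).1,
   (mainF (nodeLabel T []) (nodeLabel T [true]) (nodeLabel T [true,true])
      (nodeLabel T [true,false])).2]

/-! ### auxiliary lemmas for the algorithm -/

lemma prefB_iff (a b : Hist) : prefB a b = true ↔ a <+: b := by
  rw [prefB, decide_eq_true_eq]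
  constructor
  · intro h; rw [← h]; exact List.take_prefix _ _
  · intro h
    obtain ⟨t, rfl⟩ := h
    simp

lemma gad_col {b0 b1 : Bool} {x : ℕ} (h : gad b0 b1 x = true) : x.unpair.1 = 0 := by
  by_contra hne
  have h1 : x ≠ Nat.pair 0 0 := fun he => hne (by rw [he]; simp)
  have h2 : x ≠ Nat.pair 0 1 := fun he => hne (by rw [he]; simp)
  have h3 : x ≠ Nat.pair 0 2 := fun he => hne (by rw [he]; simp)
  rw [gad] at h
  simp [h1, h2, h3] at h

lemma colOK_point {c : ℕ} {x : ℕ} (h : colOK (c+1) x = true) :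
    x = posn c (decodeHist x.unpair.2) := by
  rw [colOK, Bool.and_eq_true, decide_eq_true_eq, decide_eq_true_eq] at h
  rw [posn, h.2, ← h.1, Nat.pair_unpair]

lemma phi_colOK {c : ℕ} {x : ℕ} (h : phi c x = true) : colOK (c+1) x = true := by
  obtain ⟨h1, h2, _⟩ := (phi_eq_true_iff c x).1 h
  rw [colOK, Bool.and_eq_true, decide_eq_true_eq, decide_eq_true_eq]
  exact ⟨h1, h2⟩

lemma phi_posn_Vb {c : ℕ} {h : Hist} (hp : phi c (posn c h) = true) : Vb c h = true :=
  ((phi_posn c h).1 hp).1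

lemma proper_len {a b : Hist} (hab : a <+: b) (hne : a ≠ b) : a.length < b.length := by
  rcases lt_or_eq_of_le hab.length_le with h | h
  · exact h
  · exact absurd (List.IsPrefix.eq_of_length hab h) hne

lemma take_of_prefix {a b : Hist} (hab : a <+: b) : b.take a.length = a := by
  obtain ⟨t, rfl⟩ := hab
  simp

/-- spec of the gadget answer. -/
lemma gadAns_spec {p0 p1 qt qf : ℕ} {b0 b1 : Bool} (h0 : gad b0 b1 p0 = true) :
    ¬ (gad b0 b1 p1 = (gadAns p0 p1 qt qf).1 ∧
       gad b0 b1 (if (gadAns p0 p1 qt qf).1 then qt else qf) = (gadAns p0 p1 qt qf).2) := by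
  classical
  set pred : Bool × Bool → Bool := fun pr =>
     ([((true:Bool),(false:Bool)),(true,true),(false,true)]).all fun g =>
       !(gad g.1 g.2 p0) ||
       !(decide (gad g.1 g.2 p1 = pr.1) &&
         decide (gad g.1 g.2 (if pr.1 then qt else qf) = pr.2)) with hpred
  -- the search succeeds
  have hsucc : ∃ pr ∈ [((true:Bool),(true:Bool)),(true,false),(false,true),(false,false)],
      pred pr = true := by
    by_contra hno
    push_neg at hno
    have key : ∀ pr ∈ [((true:Bool),(true:Bool)),(true,false),(false,true),(false,false)],
        ∃ g ∈ [((true:Bool),(false:Bool)),(true,true),(false,true)],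
          gad g.1 g.2 p0 = true ∧ gad g.1 g.2 p1 = pr.1 ∧
          gad g.1 g.2 (if pr.1 then qt else qf) = pr.2 := by
      intro pr hpr
      have hthis := hno pr hpr
      rw [hpred] at hthis
      obtain ⟨g, hg, hgc⟩ : ∃ g ∈ [((true:Bool),(false:Bool)),(true,true),(false,true)],
          (!(gad g.1 g.2 p0) ||
           !(decide (gad g.1 g.2 p1 = pr.1) &&
             decide (gad g.1 g.2 (if pr.1 then qt else qf) = pr.2))) = false := by
        by_contra hK
        push_neg at hK
        apply hthis
        simp only [List.all_eq_true]
        intro g hg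
        cases hbo : (!(gad g.1 g.2 p0) ||
           !(decide (gad g.1 g.2 p1 = pr.1) &&
             decide (gad g.1 g.2 (if pr.1 then qt else qf) = pr.2)))
        · exact absurd hbo (hK g hg)
        · rfl
      refine ⟨g, hg, ?_, ?_, ?_⟩
      · have := (Bool.or_eq_false_iff.1 hgc).1
        simpa using this
      · have hh2 : (decide (gad g.1 g.2 p1 = pr.1) &&
            decide (gad g.1 g.2 (if pr.1 then qt else qf) = pr.2)) = true := by
          simpa using (Bool.or_eq_false_iff.1 hgc).2
        rw [Bool.and_eq_true, decide_eq_true_eq, decide_eq_true_eq] at hh2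
        exact hh2.1
      · have hh2 : (decide (gad g.1 g.2 p1 = pr.1) &&
            decide (gad g.1 g.2 (if pr.1 then qt else qf) = pr.2)) = true := by
          simpa using (Bool.or_eq_false_iff.1 hgc).2
        rw [Bool.and_eq_true, decide_eq_true_eq, decide_eq_true_eq] at hh2
        exact hh2.2
    have tget : ∀ (g : Bool × Bool), ∃ v w : Bool,
        (∀ pr : Bool × Bool, gad g.1 g.2 p1 = pr.1 ∧
          gad g.1 g.2 (if pr.1 then qt else qf) = pr.2 → pr = (v, w)) := by
      intro g
      refine ⟨gad g.1 g.2 p1, gad g.1 g.2 (if gad g.1 g.2 p1 then qt else qf), ?_⟩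
      rintro ⟨x, y⟩ ⟨hx, hy⟩
      simp only at hx hy
      subst hx
      rw [← hy]
    obtain ⟨vA, wA, hA⟩ := tget (true, false)
    obtain ⟨vB, wB, hB⟩ := tget (true, true)
    obtain ⟨vC, wC, hC⟩ := tget (false, true)
    have mem : ∀ pr ∈ [((true:Bool),(true:Bool)),(true,false),(false,true),(false,false)],
        pr = (vA, wA) ∨ pr = (vB, wB) ∨ pr = (vC, wC) := by
      intro pr hpr
      obtain ⟨g, hg, _, h2, h3⟩ := key pr hpr
      simp only [List.mem_cons, List.mem_singleton] at hg
      rcases hg with rfl | rfl | rfl | h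
      · exact Or.inl (hA pr ⟨h2, h3⟩)
      · exact Or.inr (Or.inl (hB pr ⟨h2, h3⟩))
      · exact Or.inr (Or.inr (hC pr ⟨h2, h3⟩))
      · exact absurd h List.not_mem_nil
    have m1 := mem (true,true) (by simp)
    have m2 := mem (true,false) (by simp)
    have m3 := mem (false,true) (by simp)
    have m4 := mem (false,false) (by simp)
    clear mem key hA hB hC hno
    revert m1 m2 m3 m4
    revert vA wA vB wB vC wC
    decide
  obtain ⟨pr₀, hpr₀, hpred₀⟩ := hsucc
  have hfind : ∃ pr, (([((true:Bool),(true:Bool)),(true,false),(false,true),(false,false)]).find?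
      pred) = some pr ∧ pred pr = true := by
    cases hh : (([((true:Bool),(true:Bool)),(true,false),(false,true),(false,false)]).find? pred)
      with
    | none =>
      exact absurd hpred₀ (by simpa using List.find?_eq_none.1 hh pr₀ hpr₀)
    | some pr =>
      exact ⟨pr, rfl, List.find?_some hh⟩
  obtain ⟨pr, hfd, hpr⟩ := hfind
  have hgA : gadAns p0 p1 qt qf = pr := by
    rw [gadAns, ← hpred, hfd]; rfl
  rw [hgA]
  rintro ⟨hc1, hc2⟩
  have hbb : (b0, b1) ∈ [((true:Bool),(false:Bool)),(true,true),(false,true)] := by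
    have : ¬ (b0 = false ∧ b1 = false) := by
      rintro ⟨rfl, rfl⟩
      rw [gad] at h0
      split at h0 <;> simp_all
    rcases b0 <;> rcases b1 <;> simp_all
  rw [hpred] at hpr
  simp only [List.all_eq_true] at hpr
  have hthis := hpr (b0, b1) hbb
  simp only [Bool.or_eq_true, Bool.not_eq_true', Bool.not_eq_true] at hthis
  rcases hthis with h | h
  · rw [h0] at h; exact Bool.noConfusion h
  · have h' : (decide (gad b0 b1 p1 = pr.1) &&
        decide (gad b0 b1 (if pr.1 then qt else qf) = pr.2)) = false := h
    rw [hc1, hc2] at h'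
    simp at h' 


lemma branchSample_algo (T : TreeCode) (e1 e2 : Bool) :
    branchSample T [true, e1, e2] =
      [(nodeLabel T [], true), (nodeLabel T [true], e1), (nodeLabel T [true, e1], e2)] := by
  rfl

lemma zero_mem_Hset : (fun _ => false) ∈ Hset := Or.inl rfl
lemma gad_mem_Hset (b0 b1 : Bool) : gad b0 b1 ∈ Hset := Or.inr (Or.inl ⟨b0, b1, rfl⟩)
lemma phi_mem_Hset (c : ℕ) : phi c ∈ Hset := Or.inr (Or.inr ⟨c, rfl⟩)

theorem algo_dead (T : TreeCode) : ¬ Realizable Hset (branchSample T (Algo T)) := by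
  rintro ⟨f, hf, hcons⟩
  set p0 := nodeLabel T [] with hp0def
  set p1 := nodeLabel T [true] with hp1def
  set qt := nodeLabel T [true, true] with hqtdef
  set qf := nodeLabel T [true, false] with hqfdef
  have hAlgo : Algo T = [true, (mainF p0 p1 qt qf).1, (mainF p0 p1 qt qf).2] := rfl
  rw [hAlgo, branchSample_algo] at hcons
  have hc0 : f p0 = true := hcons (p0, true) (by simp [hp0def])
  have hc1 : f p1 = (mainF p0 p1 qt qf).1 := hcons (p1, (mainF p0 p1 qt qf).1) (by simp [hp1def])
  have hc2 : f (nodeLabel T [true, (mainF p0 p1 qt qf).1]) = (mainF p0 p1 qt qf).2 :=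
    hcons (nodeLabel T [true, (mainF p0 p1 qt qf).1], (mainF p0 p1 qt qf).2) (by simp)
  rcases hf with hzero | ⟨b0, b1, rfl⟩ | ⟨c, rfl⟩
  · rw [hzero] at hc0; exact Bool.noConfusion hc0
  · -- gadget case
    have hcol : p0.unpair.1 = 0 := gad_col hc0
    have hmf : mainF p0 p1 qt qf = gadAns p0 p1 qt qf := by
      rw [mainF, if_pos hcol]
    rw [hmf] at hc1 hc2
    refine gadAns_spec hc0 ⟨hc1, ?_⟩
    rw [← hc2]
    congr 1
    cases hh : (gadAns p0 p1 qt qf).1 <;> simp [hh, hp1def, hqtdef, hqfdef]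
  · -- diagonal case
    obtain ⟨hcol0, hgen0, hVb0, hnx0⟩ := (phi_eq_true_iff c p0).1 hc0
    set h0 : Hist := decodeHist p0.unpair.2 with hh0def
    have hp0 : p0 = posn c h0 := phi_true_point hc0
    have hc0ne : ¬ (p0.unpair.1 = 0) := by rw [hcol0]; omega
    have hcm1 : p0.unpair.1 - 1 = c := by rw [hcol0]; omega
    by_cases hcolp1 : colOK p0.unpair.1 p1 = false
    · have hmf : mainF p0 p1 qt qf = (true, true) := by
        rw [mainF, if_neg hc0ne, if_pos hcolp1]
      replace hc1 : phi c p1 = true := by rw [hmf] at hc1; exact hc1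
      have := phi_colOK hc1
      rw [hcol0] at hcolp1
      rw [this] at hcolp1
      exact Bool.noConfusion hcolp1
    · have hcolp1T : colOK p0.unpair.1 p1 = true := by
        cases hcc : colOK p0.unpair.1 p1
        · exact absurd hcc hcolp1
        · rfl
      set h1 : Hist := decodeHist p1.unpair.2 with hh1def
      have hp1 : p1 = posn c h1 :=
        colOK_point (c := c) (x := p1) (by rw [← hcol0]; exact hcolp1T)
      by_cases heq : h1 = h0
      · have hmf : mainF p0 p1 qt qf = (false, true) := by
          rw [mainF, if_neg hc0ne, if_neg hcolp1, if_pos heq]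
        replace hc1 : phi c p1 = false := by rw [hmf] at hc1; exact hc1
        have : p1 = p0 := by rw [hp1, hp0, heq]
        rw [this, hc0] at hc1
        exact Bool.noConfusion hc1
      · by_cases hpr1 : prefB h1 h0 = true
        · have hmf : mainF p0 p1 qt qf = (!(h0.getD h1.length (false,0)).1, true) := by
            rw [mainF, if_neg hc0ne, if_neg hcolp1, if_neg heq, if_pos hpr1]
          replace hc1 : phi c p1 = !(h0.getD h1.length (false,0)).1 := by
            rw [hmf] at hc1; exact hc1
          have hlt : h1.length < h0.length := proper_len ((prefB_iff _ _).1 hpr1) heq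
          have hrev := reveal hVb0 hlt
          rw [take_of_prefix ((prefB_iff _ _).1 hpr1)] at hrev
          rw [← hp1] at hrev
          rw [hc1] at hrev
          simp at hrev
        · by_cases hpr0 : prefB h0 h1 = true
          · have hproper : h0.length < h1.length :=
              proper_len ((prefB_iff _ _).1 hpr0) (fun hh => heq hh.symm)
            by_cases hbit : (h1.getD h0.length (false,0)).1 = false
            · have hmf : mainF p0 p1 qt qf = (true, true) := by
                rw [mainF, if_neg hc0ne, if_neg hcolp1, if_neg heq, if_neg hpr1, if_pos hpr0,
                  if_pos hbit]
              replace hc1 : phi c p1 = true := by rw [hmf] at hc1; exact hc1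
              have hVb1 : Vb c h1 = true := phi_posn_Vb (by rw [← hp1]; exact hc1)
              have hrev := reveal hVb1 hproper
              rw [take_of_prefix ((prefB_iff _ _).1 hpr0)] at hrev
              rw [← hp0, hbit] at hrev
              rw [hrev] at hc0
              exact Bool.noConfusion hc0
            · -- claimed bit for stage |h0| is true; inspect qt
              by_cases hcolqt : colOK p0.unpair.1 qt = false
              · have hmf : mainF p0 p1 qt qf = (true, true) := by
                  rw [mainF, if_neg hc0ne, if_neg hcolp1, if_neg heq, if_neg hpr1, if_pos hpr0,
                    if_neg hbit, if_pos hcolqt]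
                replace hc2 : phi c qt = true := by rw [hmf] at hc2; exact hc2
                have := phi_colOK hc2
                rw [hcol0] at hcolqt
                rw [this] at hcolqt
                exact Bool.noConfusion hcolqt
              · have hcolqtT : colOK p0.unpair.1 qt = true := by
                  cases hcc : colOK p0.unpair.1 qt
                  · exact absurd hcc hcolqt
                  · rfl
                set hq : Hist := decodeHist qt.unpair.2 with hhqdef
                have hqt : qt = posn c hq :=
                  colOK_point (c := c) (x := qt) (by rw [← hcol0]; exact hcolqtT)
                by_cases heq2 : hq = h1
                · have hmf : mainF p0 p1 qt qf = (true, false) := by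
                    rw [mainF, if_neg hc0ne, if_neg hcolp1, if_neg heq, if_neg hpr1, if_pos hpr0,
                      if_neg hbit, if_neg hcolqt, if_pos heq2]
                  replace hc1 : phi c p1 = true := by rw [hmf] at hc1; exact hc1
                  replace hc2 : phi c qt = false := by rw [hmf] at hc2; exact hc2
                  have : qt = p1 := by rw [hqt, hp1, heq2]
                  rw [this, hc1] at hc2
                  exact Bool.noConfusion hc2
                · by_cases hprq1 : prefB hq h1 = true
                  · have hmf : mainF p0 p1 qt qf =
                        (true, !(h1.getD hq.length (false,0)).1) := by
                      rw [mainF, if_neg hc0ne, if_neg hcolp1, if_neg heq, if_neg hpr1,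
                        if_pos hpr0, if_neg hbit, if_neg hcolqt, if_neg heq2, if_pos hprq1]
                    replace hc1 : phi c p1 = true := by rw [hmf] at hc1; exact hc1
                    replace hc2 : phi c qt = !(h1.getD hq.length (false,0)).1 := by
                      rw [hmf] at hc2; exact hc2
                    have hVb1 : Vb c h1 = true := phi_posn_Vb (by rw [← hp1]; exact hc1)
                    have hlt : hq.length < h1.length :=
                      proper_len ((prefB_iff _ _).1 hprq1) heq2
                    have hrev := reveal hVb1 hlt
                    rw [take_of_prefix ((prefB_iff _ _).1 hprq1)] at hrev
                    rw [← hqt] at hrev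
                    rw [hc2] at hrev
                    simp at hrev
                  · by_cases hpr1q : prefB h1 hq = true
                    · have hlt : h1.length < hq.length :=
                        proper_len ((prefB_iff _ _).1 hpr1q) (fun hh => heq2 hh.symm)
                      by_cases hchk : (Vb (p0.unpair.1 - 1) hq
                          && (hq.getD h1.length (false,0)).1) = true
                      · have hmf : mainF p0 p1 qt qf = (false, false) := by
                          rw [mainF, if_neg hc0ne, if_neg hcolp1, if_neg heq, if_neg hpr1,
                            if_pos hpr0, if_neg hbit, if_neg hcolqt, if_neg heq2, if_neg hprq1,
                            if_pos hpr1q, if_pos hchk]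
                        replace hc1 : phi c p1 = false := by rw [hmf] at hc1; exact hc1
                        rw [Bool.and_eq_true] at hchk
                        have hVbq : Vb c hq = true := by rw [← hcm1]; exact hchk.1
                        have hrev := reveal hVbq hlt
                        rw [take_of_prefix ((prefB_iff _ _).1 hpr1q)] at hrev
                        rw [← hp1, hchk.2] at hrev
                        rw [hrev] at hc1
                        exact Bool.noConfusion hc1
                      · have hmf : mainF p0 p1 qt qf = (true, true) := by
                          rw [mainF, if_neg hc0ne, if_neg hcolp1, if_neg heq, if_neg hpr1,
                            if_pos hpr0, if_neg hbit, if_neg hcolqt, if_neg heq2, if_neg hprq1,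
                            if_pos hpr1q, if_neg hchk]
                        replace hc1 : phi c p1 = true := by rw [hmf] at hc1; exact hc1
                        replace hc2 : phi c qt = true := by rw [hmf] at hc2; exact hc2
                        have hVbq : Vb c hq = true := phi_posn_Vb (by rw [← hqt]; exact hc2)
                        have hbitq : (hq.getD h1.length (false,0)).1 = false := by
                          cases hbb : (hq.getD h1.length (false,0)).1
                          · rfl
                          · exfalso
                            apply hchk
                            rw [Bool.and_eq_true, hcm1]
                            exact ⟨hVbq, hbb⟩
                        have hrev := reveal hVbq hlt
                        rw [take_of_prefix ((prefB_iff _ _).1 hpr1q), ← hp1, hbitq] at hrev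
                        rw [hrev] at hc1
                        exact Bool.noConfusion hc1
                    · -- hq and h1 incomparable
                      have hmf : mainF p0 p1 qt qf = (true, true) := by
                        rw [mainF, if_neg hc0ne, if_neg hcolp1, if_neg heq, if_neg hpr1,
                          if_pos hpr0, if_neg hbit, if_neg hcolqt, if_neg heq2, if_neg hprq1,
                          if_neg hpr1q]
                      replace hc1 : phi c p1 = true := by rw [hmf] at hc1; exact hc1
                      replace hc2 : phi c qt = true := by rw [hmf] at hc2; exact hc2
                      have hVb1 : Vb c h1 = true := phi_posn_Vb (by rw [← hp1]; exact hc1)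
                      have hVbq : Vb c hq = true := phi_posn_Vb (by rw [← hqt]; exact hc2)
                      rcases Vb_comp hVb1 hVbq with hcc | hcc
                      · exact hpr1q ((prefB_iff _ _).2 hcc)
                      · exact hprq1 ((prefB_iff _ _).2 hcc)
          · -- h1 and h0 incomparable
            have hmf : mainF p0 p1 qt qf = (true, true) := by
              rw [mainF, if_neg hc0ne, if_neg hcolp1, if_neg heq, if_neg hpr1, if_neg hpr0]
            replace hc1 : phi c p1 = true := by rw [hmf] at hc1; exact hc1
            have hVb1 : Vb c h1 = true := phi_posn_Vb (by rw [← hp1]; exact hc1)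
            rcases Vb_comp hVb0 hVb1 with hcc | hcc
            · exact hpr0 ((prefB_iff _ _).2 hcc)
            · exact hpr1 ((prefB_iff _ _).2 hcc)


lemma not_eldim0 : ¬ EldimLe Hset 0 := by
  rintro ⟨A, -, hA⟩
  obtain ⟨hlen, hnr⟩ := hA []
  obtain ⟨b, hb⟩ := List.length_eq_one_iff.1 hlen
  apply hnr
  rw [hb]
  cases b
  · refine ⟨(fun _ => false), zero_mem_Hset, ?_⟩
    intro p hp
    rw [show branchSample [] [false] = [((0:ℕ), false)] from rfl] at hp
    rcases List.mem_singleton.1 hp with rfl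
    rfl
  · refine ⟨gad true true, gad_mem_Hset _ _, ?_⟩
    intro p hp
    rw [show branchSample [] [true] = [((0:ℕ), true)] from rfl] at hp
    rcases List.mem_singleton.1 hp with rfl
    decide

lemma not_eldim1 : ¬ EldimLe Hset 1 := by
  rintro ⟨A, -, hA⟩
  obtain ⟨hlen, hnr⟩ :=
    hA [([], Nat.pair 0 0), ([true], Nat.pair 0 1), ([false], Nat.pair 0 2)]
  obtain ⟨b0, b1, hb⟩ := List.length_eq_two.1 hlen
  apply hnr
  rw [hb]
  refine ⟨gad b0 b1, gad_mem_Hset _ _, ?_⟩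
  intro p hp
  cases b0 <;> cases b1 <;>
    simp only [show ∀ y0 y1 : Bool, branchSample
        [([], Nat.pair 0 0), ([true], Nat.pair 0 1), ([false], Nat.pair 0 2)] [y0, y1] =
        [(Nat.pair 0 0, y0),
         ((if y0 then Nat.pair 0 1 else Nat.pair 0 2), y1)] from by decide] at hp <;>
    rcases List.mem_cons.1 hp with rfl | hp2 <;>
    first
      | decide
      | (rcases List.mem_singleton.1 hp2 with rfl; decide)


/-! ### the diagonal run -/

open Classical in
noncomputable def step (c : ℕ) (h : Hist) : Option (Bool × ℕ) :=
  if H : ∃ p : Bool × ℕ, stageOK c h p.1 p.2 = true then some H.choose else none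

noncomputable def run (c : ℕ) : ℕ → Hist
  | 0 => []
  | i+1 => match step c (run c i) with
           | some p => run c i ++ [p]
           | none => run c i

lemma Vb_nil (c : ℕ) : Vb c [] = true := by simp [Vb]

lemma Vb_snoc (c : ℕ) (h : Hist) (p : Bool × ℕ) :
    Vb c (h ++ [p]) = true ↔ (Vb c h = true ∧ stageOK c h p.1 p.2 = true) := by
  have len : (h ++ [p]).length = h.length + 1 := by simp
  constructor
  · intro hv
    rw [Vb_iff] at hv
    constructor
    · rw [Vb_iff]
      intro j hj
      have hj' : j < (h ++ [p]).length := by omega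
      have := hv j hj'
      rwa [List.take_append_of_le_length hj.le, List.getD_eq_getElem?_getD,
        List.getElem?_append, if_pos hj, ← List.getD_eq_getElem?_getD] at this
    · have := hv h.length (by omega)
      rwa [List.take_append_of_le_length le_rfl, List.take_length,
        List.getD_eq_getElem?_getD, List.getElem?_append_right le_rfl,
        Nat.sub_self, List.getElem?_cons_zero, Option.getD_some] at this
  · rintro ⟨hv, hst⟩
    rw [Vb_iff] at hv ⊢
    intro j hj
    rw [len] at hj
    rcases Nat.lt_or_ge j h.length with hlt | hge
    · rw [List.take_append_of_le_length hlt.le, List.getD_eq_getElem?_getD,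
        List.getElem?_append, if_pos hlt, ← List.getD_eq_getElem?_getD]
      exact hv j hlt
    · have hj2 : j = h.length := by omega
      subst hj2
      rwa [List.take_append_of_le_length le_rfl, List.take_length,
        List.getD_eq_getElem?_getD, List.getElem?_append_right le_rfl,
        Nat.sub_self, List.getElem?_cons_zero, Option.getD_some]

lemma hsample_take (c : ℕ) (h : Hist) (i : ℕ) (hi : i ≤ h.length) :
    (hsample c h).take i = hsample c (h.take i) := by
  rw [hsample, hsample, ← List.map_take, List.take_range, List.length_take,
    min_eq_left hi]
  apply List.map_congr_left
  intro j hj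
  rw [List.mem_range] at hj
  congr 1
  · rw [List.take_take, min_eq_left hj.le]
  · congr 1
    rw [List.getD_eq_getElem?_getD, List.getD_eq_getElem?_getD, List.getElem?_take, if_pos hj]

lemma hsample_length (c : ℕ) (h : Hist) : (hsample c h).length = h.length := by
  simp [hsample]

lemma hsample_getD (c : ℕ) (h : Hist) (i : ℕ) (hi : i < h.length) :
    (hsample c h).getD i (0, false) = (posn c (h.take i), (h.getD i (false,0)).1) := by
  rw [hsample, List.getD_eq_getElem?_getD, List.getElem?_map, List.getElem?_range hi]
  rfl

lemma real_of_Vb {c : ℕ} {h : Hist} (hv : Vb c h = true) :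
    Realizable Hset (hsample c h) := by
  refine ⟨phi c, phi_mem_Hset c, ?_⟩
  intro p hp
  rw [hsample] at hp
  simp only [List.mem_map, List.mem_range] at hp
  obtain ⟨j, hj, rfl⟩ := hp
  exact reveal hv hj


lemma run_length_Vb {L : Sample × ℕ →. Bool} {cL : Code}
    (hcL : cL.eval = fun n => Part.bind ((Encodable.decode n : Option (Sample × ℕ)) : Part (Sample × ℕ)) fun a => (L a).map encode)
    (hdom : ∀ S x, Realizable Hset S → (L (S,x)).Dom) :
    ∀ i, (run (encode cL) i).length = i ∧ Vb (encode cL) (run (encode cL) i) = true ∧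
      run (encode cL) (i+1) = run (encode cL) i ++ [(step (encode cL) (run (encode cL) i)).getD (false, 0)] := by
  set c := encode cL with hc
  have hofNat : (ofNat Code c) = cL := by rw [hc]; simp
  have keyEval : ∀ a : Sample × ℕ, cL.eval (encode a) = (L a).map encode := by
    intro a
    rw [hcL]
    simp [Encodable.encodek]
  have hstep : ∀ h : Hist, Vb c h = true → ∃ p : Bool × ℕ, stageOK c h p.1 p.2 = true := by
    intro h hv
    have hreal := real_of_Vb hv
    have hDom := hdom (hsample c h) (posn c h) hreal
    obtain ⟨b, hb⟩ := Part.dom_iff_mem.1 hDom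
    have hmem : encode b ∈ cL.eval (inp c h) := by
      rw [inp, keyEval (hsample c h, posn c h)]
      exact Part.mem_map encode hb
    obtain ⟨k, hk⟩ := evaln_complete.1 hmem
    have hex : ∃ t, (evaln t cL (inp c h)).isSome = true := ⟨k, by rw [hk]; rfl⟩
    set t := Nat.find hex with ht
    have htsome : (evaln t cL (inp c h)).isSome = true := Nat.find_spec hex
    obtain ⟨m, hm⟩ := Option.isSome_iff_exists.1 htsome
    have hmeval : m ∈ cL.eval (inp c h) := evaln_sound (by rw [hm]; rfl)
    have hmb : m = encode b := Part.mem_unique hmeval hmem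
    have ht0 : t ≠ 0 := by
      intro h0
      rw [h0] at htsome
      simp [evaln] at htsome
    have htprev : evaln (t-1) cL (inp c h) = none := by
      have := Nat.find_min hex (m := t - 1) (by omega)
      cases hh : evaln (t-1) cL (inp c h)
      · rfl
      · exact absurd (by rw [hh]; rfl) this
    refine ⟨(!b, t), ?_⟩
    rw [stageOK, hofNat]
    simp only [Bool.and_eq_true, Bool.not_eq_true', decide_eq_false_iff_not,
      decide_eq_true_eq, Option.isNone_iff_eq_none]
    refine ⟨⟨ht0, htprev⟩, ?_⟩
    rw [hm]
    show (decode m : Option Bool) = some (!(!b))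
    rw [hmb, Bool.not_not]
    simp [Encodable.encodek]
  intro i
  induction i with
  | zero =>
    refine ⟨rfl, Vb_nil c, ?_⟩
    obtain ⟨p, hp⟩ := hstep [] (Vb_nil c)
    rw [show run c 1 = match step c (run c 0) with
        | some p => run c 0 ++ [p] | none => run c 0 from rfl]
    rw [show run c 0 = ([] : Hist) from rfl]
    rw [step, dif_pos (⟨p, hp⟩ : ∃ p : Bool × ℕ, stageOK c [] p.1 p.2 = true)]
    simp
  | succ n ih =>
    obtain ⟨hlen, hVb, hext⟩ := ih
    have hVb' : Vb c (run c (n+1)) = true := by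
      rw [hext]
      rw [Vb_snoc]
      obtain ⟨q, hq⟩ := hstep (run c n) hVb
      have hex2 : ∃ p : Bool × ℕ, stageOK c (run c n) p.1 p.2 = true := ⟨q, hq⟩
      have hsd : step c (run c n) = some (Exists.choose hex2) := by
        rw [step, dif_pos hex2]
      rw [hsd]
      simp only [Option.getD_some]
      exact ⟨hVb, Exists.choose_spec hex2⟩
    refine ⟨?_, hVb', ?_⟩
    · rw [hext]
      simp [hlen]
    · obtain ⟨q, hq⟩ := hstep (run c (n+1)) hVb'
      have hex2 : ∃ p : Bool × ℕ, stageOK c (run c (n+1)) p.1 p.2 = true := ⟨q, hq⟩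
      rw [show run c (n+2) = match step c (run c (n+1)) with
          | some p => run c (n+1) ++ [p] | none => run c (n+1) from rfl]
      rw [step, dif_pos hex2]
      simp


theorem no_learner (d : ℕ) :
    ¬ ∃ L : Sample × ℕ →. Bool, Partrec L ∧
      (∀ (S : Sample) (x : ℕ), Realizable Hset S → (L (S, x)).Dom) ∧
      (∀ S : Sample, Realizable Hset S → pmistakes L S ≤ d) := by
  rintro ⟨L, hLpart, hdom, hmist⟩
  obtain ⟨cL, hcL⟩ := Nat.Partrec.Code.exists_code.1 hLpart
  have main := run_length_Vb (L := L) (cL := cL) hcL hdom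
  set c := encode cL with hc
  have hofNat : (ofNat Code c) = cL := by rw [hc]; simp
  have keyEval : ∀ a : Sample × ℕ, cL.eval (encode a) = (L a).map encode := by
    intro a
    rw [hcL]
    simp [Encodable.encodek]
  have hpref : ∀ i j, i ≤ j → run c i <+: run c j := by
    intro i j hij
    induction j with
    | zero =>
      have : i = 0 := by omega
      subst this; exact List.prefix_rfl
    | succ n ih =>
      rcases Nat.lt_or_ge i (n+1) with hlt | hge
      · refine (ih (by omega)).trans ?_
        rw [(main n).2.2]
        exact List.prefix_append _ _
      · have : i = n + 1 := by omega
        subst this; exact List.prefix_rfl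
  have hSlen : (hsample c (run c (d+1))).length = d + 1 := by
    rw [hsample_length, (main (d+1)).1]
  have hreal : Realizable Hset (hsample c (run c (d+1))) := real_of_Vb (main (d+1)).2.1
  have htake : ∀ i, i ≤ d+1 → (run c (d+1)).take i = run c i := by
    intro i hi
    have hp := hpref i (d+1) hi
    have h2 := take_of_prefix hp
    rw [(main i).1] at h2
    exact h2
  have hcond : ∀ i, i < d + 1 →
      ((hsample c (run c (d+1))).getD i (0,false)).2 ∉
        L ((hsample c (run c (d+1))).take i, ((hsample c (run c (d+1))).getD i (0,false)).1) := by
    intro i hi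
    have hilen : i < (run c (d+1)).length := by rw [(main (d+1)).1]; omega
    have hgetD := hsample_getD c (run c (d+1)) i hilen
    have htk := htake i (le_of_lt hi)
    have hSt : (hsample c (run c (d+1))).take i = hsample c (run c i) := by
      rw [hsample_take c _ i (by rw [(main (d+1)).1]; omega), htk]
    rw [hgetD, hSt]
    simp only
    rw [htk]
    set y := ((run c (d+1)).getD i (false,0)).1 with hy
    set t := ((run c (d+1)).getD i (false,0)).2 with ht
    intro hmem
    have hst := (Vb_iff c (run c (d+1))).1 (main (d+1)).2.1 i hilen
    rw [htk, ← hy, ← ht] at hst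
    rw [stageOK, hofNat] at hst
    simp only [Bool.and_eq_true, Bool.not_eq_true', decide_eq_false_iff_not,
      decide_eq_true_eq, Option.isNone_iff_eq_none] at hst
    obtain ⟨-, hsome⟩ := hst
    obtain ⟨m, hm, hdm⟩ := Option.bind_eq_some_iff.1 hsome
    have hmeval : m ∈ cL.eval (inp c (run c i)) := evaln_sound (by rw [hm]; rfl)
    rw [inp, keyEval] at hmeval
    obtain ⟨b, hbL, hbm⟩ := (Part.mem_map_iff encode).1 hmeval
    rw [← hbm] at hdm
    rw [Encodable.encodek] at hdm
    have hby : b = !y := Option.some.inj hdm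
    have : y = b := Part.mem_unique hmem hbL
    rw [hby] at this
    simp at this
  have hsetEq : {i | i < (hsample c (run c (d+1))).length ∧
      ((hsample c (run c (d+1))).getD i (0,false)).2 ∉
        L ((hsample c (run c (d+1))).take i,
           ((hsample c (run c (d+1))).getD i (0,false)).1)} = {i | i < d+1} := by
    ext i
    simp only [Set.mem_setOf_eq, hSlen]
    exact ⟨fun h => h.1, fun h => ⟨h, hcond i h⟩⟩
  have hcount : pmistakes L (hsample c (run c (d+1))) = d + 1 := by
    rw [pmistakes, hsetEq, show {i | i < d+1} = ↑(Finset.range (d+1)) from by ext i; simp]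
    rw [Set.ncard_coe_finset, Finset.card_range]
  have := hmist _ hreal
  omega


/-! ### computability of the algorithm -/

section PrimrecProofs
open Primrec

def takeStep : (ℕ × Hist) × (Bool × ℕ) → ℕ × Hist :=
  fun s => if s.1.1 = 0 then s.1 else (s.1.1 - 1, s.1.2 ++ [s.2])

lemma foldl_takeStep_zero (l : Hist) (acc : Hist) :
    l.foldl (fun s b => takeStep (s, b)) (0, acc) = (0, acc) := by
  induction l generalizing acc with
  | nil => rfl
  | cons e l ih =>
    rw [List.foldl_cons, show takeStep ((0, acc), e) = (0, acc) from rfl, ih]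

lemma foldl_takeStep (l : Hist) (n : ℕ) (acc : Hist) :
    (l.foldl (fun s b => takeStep (s, b)) (n, acc)).2 = acc ++ l.take n := by
  induction l generalizing n acc with
  | nil => simp
  | cons e l ih =>
    rcases n with _ | k
    · rw [List.foldl_cons]
      rw [show takeStep ((0, acc), e) = (0, acc) from rfl]
      rw [foldl_takeStep_zero]
      simp
    · rw [List.foldl_cons]
      rw [show takeStep ((k+1, acc), e) = (k, acc ++ [e]) from by simp [takeStep]]
      rw [ih]
      simp

lemma hTakeStep : Primrec takeStep := by
  unfold takeStep
  refine Primrec.ite (Primrec.eq.comp (Primrec.fst.comp Primrec.fst) (Primrec.const 0))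
    Primrec.fst (Primrec.pair ?_ ?_)
  · exact Primrec₂.comp Primrec.nat_sub (Primrec.fst.comp Primrec.fst) (Primrec.const 1)
  · exact Primrec₂.comp Primrec.list_append (Primrec.snd.comp Primrec.fst)
      (Primrec₂.comp Primrec.list_cons Primrec.snd (Primrec.const []))

lemma hTakeP : Primrec (fun p : Hist × ℕ => p.1.take p.2) := by
  have h1 : Primrec (fun p : Hist × ℕ =>
      (p.1.foldl (fun s b => takeStep (s, b)) (p.2, ([] : Hist))).2) := by
    apply Primrec.snd.comp
    apply Primrec.list_foldl Primrec.fst (Primrec.pair Primrec.snd (Primrec.const []))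
    show Primrec fun p : (Hist × ℕ) × ((ℕ × Hist) × Bool × ℕ) => takeStep p.2
    exact hTakeStep.comp Primrec.snd
  exact h1.of_eq (fun p => by rw [foldl_takeStep]; simp)


lemma nodeLabel_foldr (T : TreeCode) (p : List Bool) :
    nodeLabel T p = T.foldr (fun e acc => if e.1 = p then e.2 else acc) 0 := by
  induction T with
  | nil => rfl
  | cons e T ih =>
    rcases e with ⟨k, v⟩
    rw [List.foldr_cons, ← ih]
    by_cases hk : k = p
    · subst hk; simp [nodeLabel, List.lookup]
    · have hbeq : (p == k) = false := by
        rw [beq_eq_false_iff_ne]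
        exact fun hh => hk hh.symm
      simp only [nodeLabel, List.lookup, hbeq]
      simp [hk]

lemma hNodeLabelP : Primrec (fun p : TreeCode × List Bool => nodeLabel p.1 p.2) := by
  have h1 := Primrec.list_foldr (α := TreeCode × List Bool) (β := List Bool × ℕ) (σ := ℕ)
    (f := Prod.fst) (g := fun _ => 0)
    (h := fun p es => if es.1.1 = p.2 then es.1.2 else es.2)
    Primrec.fst (Primrec.const 0)
    (Primrec.ite
      (Primrec.eq.comp (Primrec.fst.comp (Primrec.fst.comp Primrec.snd))
        (Primrec.snd.comp Primrec.fst))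
      (Primrec.snd.comp (Primrec.fst.comp Primrec.snd))
      (Primrec.snd.comp Primrec.snd))
  exact h1.of_eq (fun p => (nodeLabel_foldr p.1 p.2).symm)

lemma hDecodeHist : Primrec decodeHist :=
  Primrec₂.comp Primrec.option_getD Primrec.decode (Primrec.const [])

lemma hPosnP : Primrec (fun p : ℕ × Hist => posn p.1 p.2) := by
  have h1 : Primrec (fun p : ℕ × Hist => Nat.pair (p.1 + 1) (encode p.2)) :=
    Primrec₂.comp Primrec₂.natPair (Primrec.succ.comp Primrec.fst)
      (Primrec.encode.comp Primrec.snd)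
  exact h1.of_eq (fun p => rfl)

lemma hGetDP : Primrec (fun q : Hist × ℕ => q.1.getD q.2 (false, 0)) :=
  Primrec₂.comp (f := fun (l : Hist) (n : ℕ) => l.getD n (false, 0))
    (Primrec.list_getD (false, 0)) Primrec.fst Primrec.snd

lemma hHsampleP : Primrec (fun p : ℕ × Hist => hsample p.1 p.2) := by
  have h1 : Primrec (fun p : ℕ × Hist =>
      (List.range p.2.length).map fun j => (posn p.1 (p.2.take j), (p.2.getD j (false,0)).1)) := by
    apply Primrec.list_map
      (Primrec.list_range.comp (Primrec.list_length.comp Primrec.snd))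
    show Primrec fun q : (ℕ × Hist) × ℕ =>
      (posn q.1.1 (q.1.2.take q.2), (q.1.2.getD q.2 (false,0)).1)
    apply Primrec.pair
    · exact hPosnP.comp (Primrec.pair (Primrec.fst.comp Primrec.fst)
        (hTakeP.comp (Primrec.pair (Primrec.snd.comp Primrec.fst) Primrec.snd)))
    · exact Primrec.fst.comp (hGetDP.comp
        (Primrec.pair (Primrec.snd.comp Primrec.fst) Primrec.snd))
  exact h1.of_eq (fun p => rfl)

lemma hInpP : Primrec (fun p : ℕ × Hist => inp p.1 p.2) :=
  Primrec.encode.comp (Primrec.pair hHsampleP hPosnP)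

lemma hIsNoneNat : Primrec (@Option.isNone ℕ) :=
  (Primrec.not.comp Primrec.option_isSome).of_eq (fun o => by cases o <;> rfl)

lemma hAndB : Primrec₂ (· && · : Bool → Bool → Bool) := Primrec.dom_bool₂ _

lemma hStageOKP : Primrec (fun q : (ℕ × Hist) × Bool × ℕ =>
    stageOK q.1.1 q.1.2 q.2.1 q.2.2) := by
  have hc : Primrec (fun q : (ℕ × Hist) × Bool × ℕ => q.1.1) :=
    Primrec.fst.comp Primrec.fst
  have hh : Primrec (fun q : (ℕ × Hist) × Bool × ℕ => q.1.2) :=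
    Primrec.snd.comp Primrec.fst
  have hy : Primrec (fun q : (ℕ × Hist) × Bool × ℕ => q.2.1) :=
    Primrec.fst.comp Primrec.snd
  have ht : Primrec (fun q : (ℕ × Hist) × Bool × ℕ => q.2.2) :=
    Primrec.snd.comp Primrec.snd
  have hinp : Primrec (fun q : (ℕ × Hist) × Bool × ℕ => inp q.1.1 q.1.2) :=
    hInpP.comp (Primrec.pair hc hh)
  have hcode : Primrec (fun q : (ℕ × Hist) × Bool × ℕ => ofNat Code q.1.1) :=
    (Primrec.ofNat Code).comp hc
  have hev1 : Primrec (fun q : (ℕ × Hist) × Bool × ℕ =>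
      evaln (q.2.2 - 1) (ofNat Code q.1.1) (inp q.1.1 q.1.2)) :=
    primrec_evaln.comp (Primrec.pair (Primrec.pair
      (Primrec₂.comp Primrec.nat_sub ht (Primrec.const 1)) hcode) hinp)
  have hev2 : Primrec (fun q : (ℕ × Hist) × Bool × ℕ =>
      evaln q.2.2 (ofNat Code q.1.1) (inp q.1.1 q.1.2)) :=
    primrec_evaln.comp (Primrec.pair (Primrec.pair ht hcode) hinp)
  have hbind : Primrec (fun q : (ℕ × Hist) × Bool × ℕ =>
      (evaln q.2.2 (ofNat Code q.1.1) (inp q.1.1 q.1.2)).bind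
        fun m => (decode m : Option Bool)) :=
    Primrec.option_bind hev2 (Primrec.decode.comp Primrec.snd)
  have hA : Primrec (fun q : (ℕ × Hist) × Bool × ℕ => (!(decide (q.2.2 = 0)))) :=
    Primrec.not.comp (Primrec.eq.comp ht (Primrec.const 0)).decide
  have hB : Primrec (fun q : (ℕ × Hist) × Bool × ℕ =>
      (evaln (q.2.2 - 1) (ofNat Code q.1.1) (inp q.1.1 q.1.2)).isNone) :=
    hIsNoneNat.comp hev1
  have hC : Primrec (fun q : (ℕ × Hist) × Bool × ℕ =>
      decide ((((evaln q.2.2 (ofNat Code q.1.1) (inp q.1.1 q.1.2)).bind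
        fun m => (decode m : Option Bool))) = some (!q.2.1))) :=
    (Primrec.eq.comp hbind (Primrec.option_some.comp (Primrec.not.comp hy))).decide
  exact (hAndB.comp (hAndB.comp hA hB) hC).of_eq (fun q => rfl)

lemma list_all_foldr {α : Type*} (l : List α) (p : α → Bool) :
    l.all p = l.foldr (fun a acc => p a && acc) true := by
  induction l with
  | nil => rfl
  | cons a l ih => simp [List.all_cons, ih]

lemma hVbP : Primrec (fun p : ℕ × Hist => Vb p.1 p.2) := by
  have hgd : Primrec (fun q : (ℕ × Hist) × ℕ × Bool => q.1.2.getD q.2.1 (false, 0)) :=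
    hGetDP.comp (Primrec.pair (Primrec.snd.comp Primrec.fst) (Primrec.fst.comp Primrec.snd))
  have hst : Primrec (fun q : (ℕ × Hist) × ℕ × Bool =>
      (stageOK q.1.1 (q.1.2.take q.2.1) (q.1.2.getD q.2.1 (false,0)).1
        (q.1.2.getD q.2.1 (false,0)).2 && q.2.2)) := by
    apply hAndB.comp ?_ (Primrec.snd.comp Primrec.snd)
    exact hStageOKP.comp (Primrec.pair
      (Primrec.pair (Primrec.fst.comp Primrec.fst)
        (hTakeP.comp (Primrec.pair (Primrec.snd.comp Primrec.fst)
          (Primrec.fst.comp Primrec.snd))))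
      (Primrec.pair (Primrec.fst.comp hgd) (Primrec.snd.comp hgd)))
  have h1 := Primrec.list_foldr (α := ℕ × Hist) (β := ℕ) (σ := Bool)
    (f := fun p => List.range p.2.length) (g := fun _ => true)
    (h := fun p jb =>
      stageOK p.1 (p.2.take jb.1) (p.2.getD jb.1 (false,0)).1 (p.2.getD jb.1 (false,0)).2
        && jb.2)
    (Primrec.list_range.comp (Primrec.list_length.comp Primrec.snd))
    (Primrec.const true) hst
  exact h1.of_eq (fun p => by rw [Vb, list_all_foldr])


lemma hPrefBP : Primrec (fun q : Hist × Hist => prefB q.1 q.2) := by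
  have h1 : Primrec (fun q : Hist × Hist => decide (q.2.take q.1.length = q.1)) :=
    (Primrec.eq.comp
      (hTakeP.comp (Primrec.pair Primrec.snd (Primrec.list_length.comp Primrec.fst)))
      Primrec.fst).decide
  exact h1.of_eq (fun q => rfl)

lemma hColOKP : Primrec (fun q : ℕ × ℕ => colOK q.1 q.2) := by
  have hu : Primrec (fun q : ℕ × ℕ => q.2.unpair) := Primrec.unpair.comp Primrec.snd
  have h1 : Primrec (fun q : ℕ × ℕ =>
      ((decide (q.2.unpair.1 = q.1)) &&
       (decide (encode (decodeHist q.2.unpair.2) = q.2.unpair.2)))) :=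
    hAndB.comp
      (Primrec.eq.comp (Primrec.fst.comp hu) Primrec.fst).decide
      (Primrec.eq.comp
        (Primrec.encode.comp (hDecodeHist.comp (Primrec.snd.comp hu)))
        (Primrec.snd.comp hu)).decide
  exact h1.of_eq (fun q => rfl)

lemma hGadP (b0 b1 : Bool) : Primrec (gad b0 b1) := by
  unfold gad
  exact Primrec.ite (Primrec.eq.comp Primrec.id (Primrec.const (Nat.pair 0 0)))
    (Primrec.const b0)
    (Primrec.ite (Primrec.eq.comp Primrec.id (Primrec.const (Nat.pair 0 1)))
      (Primrec.const (b0 && b1))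
      (Primrec.ite (Primrec.eq.comp Primrec.id (Primrec.const (Nat.pair 0 2)))
        (Primrec.const (!b0 && b1))
        (Primrec.const false)))

def gadCore
    (u : (Bool × Bool × Bool) × (Bool × Bool × Bool) × (Bool × Bool × Bool) ×
      (Bool × Bool × Bool)) : Bool × Bool :=
  (([((true:Bool),(true:Bool)),(true,false),(false,true),(false,false)]).find? fun pr =>
    (!(u.1.1) || !(decide (u.2.1.1 = pr.1) &&
        decide ((if pr.1 then u.2.2.1.1 else u.2.2.2.1) = pr.2))) &&
    ((!(u.1.2.1) || !(decide (u.2.1.2.1 = pr.1) &&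
        decide ((if pr.1 then u.2.2.1.2.1 else u.2.2.2.2.1) = pr.2))) &&
     ((!(u.1.2.2) || !(decide (u.2.1.2.2 = pr.1) &&
        decide ((if pr.1 then u.2.2.1.2.2 else u.2.2.2.2.2) = pr.2))) &&
      true))).getD (true,true)

lemma gadAns_eq_core (p0 p1 qt qf : ℕ) :
    gadAns p0 p1 qt qf = gadCore
      ((gad true false p0, gad true true p0, gad false true p0),
       (gad true false p1, gad true true p1, gad false true p1),
       (gad true false qt, gad true true qt, gad false true qt),
       (gad true false qf, gad true true qf, gad false true qf)) := by
  unfold gadAns gadCore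
  congr 2
  funext pr
  rcases pr with ⟨b1, b2⟩
  cases b1 <;> simp [List.all]

lemma hGadAnsP :
    Primrec (fun q : ℕ × ℕ × ℕ × ℕ => gadAns q.1 q.2.1 q.2.2.1 q.2.2.2) := by
  have hp0 : Primrec (fun q : ℕ × ℕ × ℕ × ℕ => q.1) := Primrec.fst
  have hp1 : Primrec (fun q : ℕ × ℕ × ℕ × ℕ => q.2.1) := Primrec.fst.comp Primrec.snd
  have hqt : Primrec (fun q : ℕ × ℕ × ℕ × ℕ => q.2.2.1) :=
    Primrec.fst.comp (Primrec.snd.comp Primrec.snd)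
  have hqf : Primrec (fun q : ℕ × ℕ × ℕ × ℕ => q.2.2.2) :=
    Primrec.snd.comp (Primrec.snd.comp Primrec.snd)
  have tripleOf : ∀ {f : ℕ × ℕ × ℕ × ℕ → ℕ}, Primrec f →
      Primrec (fun q => (gad true false (f q), gad true true (f q), gad false true (f q))) := by
    intro f hf
    exact Primrec.pair ((hGadP true false).comp hf)
      (Primrec.pair ((hGadP true true).comp hf) ((hGadP false true).comp hf))
  have h1 := (Primrec.dom_finite gadCore).comp
    (Primrec.pair (tripleOf hp0)
      (Primrec.pair (tripleOf hp1) (Primrec.pair (tripleOf hqt) (tripleOf hqf))))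
  exact h1.of_eq (fun q => (gadAns_eq_core q.1 q.2.1 q.2.2.1 q.2.2.2).symm)

lemma hMainFP :
    Primrec (fun q : ℕ × ℕ × ℕ × ℕ => mainF q.1 q.2.1 q.2.2.1 q.2.2.2) := by
  have hp0 : Primrec (fun q : ℕ × ℕ × ℕ × ℕ => q.1) := Primrec.fst
  have hp1 : Primrec (fun q : ℕ × ℕ × ℕ × ℕ => q.2.1) := Primrec.fst.comp Primrec.snd
  have hqt : Primrec (fun q : ℕ × ℕ × ℕ × ℕ => q.2.2.1) :=
    Primrec.fst.comp (Primrec.snd.comp Primrec.snd)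
  have hu1 : Primrec (fun q : ℕ × ℕ × ℕ × ℕ => q.1.unpair.1) :=
    Primrec.fst.comp (Primrec.unpair.comp hp0)
  have hh0 : Primrec (fun q : ℕ × ℕ × ℕ × ℕ => decodeHist q.1.unpair.2) :=
    hDecodeHist.comp (Primrec.snd.comp (Primrec.unpair.comp hp0))
  have hh1 : Primrec (fun q : ℕ × ℕ × ℕ × ℕ => decodeHist q.2.1.unpair.2) :=
    hDecodeHist.comp (Primrec.snd.comp (Primrec.unpair.comp hp1))
  have hhq : Primrec (fun q : ℕ × ℕ × ℕ × ℕ => decodeHist q.2.2.1.unpair.2) :=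
    hDecodeHist.comp (Primrec.snd.comp (Primrec.unpair.comp hqt))
  have hbit0 : Primrec (fun q : ℕ × ℕ × ℕ × ℕ =>
      ((decodeHist q.1.unpair.2).getD (decodeHist q.2.1.unpair.2).length (false,0)).1) :=
    Primrec.fst.comp (hGetDP.comp (Primrec.pair hh0 (Primrec.list_length.comp hh1)))
  have hbit1 : Primrec (fun q : ℕ × ℕ × ℕ × ℕ =>
      ((decodeHist q.2.1.unpair.2).getD (decodeHist q.1.unpair.2).length (false,0)).1) :=
    Primrec.fst.comp (hGetDP.comp (Primrec.pair hh1 (Primrec.list_length.comp hh0)))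
  have hbitq : Primrec (fun q : ℕ × ℕ × ℕ × ℕ =>
      ((decodeHist q.2.1.unpair.2).getD (decodeHist q.2.2.1.unpair.2).length (false,0)).1) :=
    Primrec.fst.comp (hGetDP.comp (Primrec.pair hh1 (Primrec.list_length.comp hhq)))
  have hbitq2 : Primrec (fun q : ℕ × ℕ × ℕ × ℕ =>
      ((decodeHist q.2.2.1.unpair.2).getD (decodeHist q.2.1.unpair.2).length (false,0)).1) :=
    Primrec.fst.comp (hGetDP.comp (Primrec.pair hhq (Primrec.list_length.comp hh1)))
  unfold mainF
  refine Primrec.ite (Primrec.eq.comp hu1 (Primrec.const 0)) hGadAnsP ?_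
  refine Primrec.ite
    (Primrec.eq.comp (hColOKP.comp (Primrec.pair hu1 hp1)) (Primrec.const false))
    (Primrec.const (true, true)) ?_
  refine Primrec.ite (Primrec.eq.comp hh1 hh0) (Primrec.const (false, true)) ?_
  refine Primrec.ite
    (Primrec.eq.comp (hPrefBP.comp (Primrec.pair hh1 hh0)) (Primrec.const true))
    (Primrec.pair (Primrec.not.comp hbit0) (Primrec.const true)) ?_
  refine Primrec.ite
    (Primrec.eq.comp (hPrefBP.comp (Primrec.pair hh0 hh1)) (Primrec.const true))
    ?_ (Primrec.const (true, true))
  refine Primrec.ite (Primrec.eq.comp hbit1 (Primrec.const false))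
    (Primrec.const (true, true)) ?_
  refine Primrec.ite
    (Primrec.eq.comp (hColOKP.comp (Primrec.pair hu1 hqt)) (Primrec.const false))
    (Primrec.const (true, true)) ?_
  refine Primrec.ite (Primrec.eq.comp hhq hh1) (Primrec.const (true, false)) ?_
  refine Primrec.ite
    (Primrec.eq.comp (hPrefBP.comp (Primrec.pair hhq hh1)) (Primrec.const true))
    (Primrec.pair (Primrec.const true) (Primrec.not.comp hbitq)) ?_
  refine Primrec.ite
    (Primrec.eq.comp (hPrefBP.comp (Primrec.pair hh1 hhq)) (Primrec.const true))
    ?_ (Primrec.const (true, true))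
  refine Primrec.ite
    (Primrec.eq.comp
      (hAndB.comp
        (hVbP.comp (Primrec.pair
          (Primrec₂.comp Primrec.nat_sub hu1 (Primrec.const 1)) hhq))
        hbitq2)
      (Primrec.const true))
    (Primrec.const (false, false)) (Primrec.const (true, true))

theorem computable_Algo : Computable Algo := by
  have hNode : ∀ p : List Bool, Primrec (fun T : TreeCode => nodeLabel T p) := by
    intro p
    exact hNodeLabelP.comp (Primrec.pair Primrec.id (Primrec.const p))
  have hquad : Primrec (fun T : TreeCode =>
      ((nodeLabel T [], (nodeLabel T [true], (nodeLabel T [true,true],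
        nodeLabel T [true,false]))) : ℕ × ℕ × ℕ × ℕ)) :=
    Primrec.pair (hNode [])
      (Primrec.pair (hNode [true]) (Primrec.pair (hNode [true,true]) (hNode [true,false])))
  have hF := hMainFP.comp hquad
  have h1 : Primrec (fun T : TreeCode =>
      [true,
        (mainF (nodeLabel T []) (nodeLabel T [true]) (nodeLabel T [true,true])
          (nodeLabel T [true,false])).1,
        (mainF (nodeLabel T []) (nodeLabel T [true]) (nodeLabel T [true,true])
          (nodeLabel T [true,false])).2]) :=
    Primrec₂.comp Primrec.list_cons (Primrec.const true)
      (Primrec₂.comp Primrec.list_cons (Primrec.fst.comp hF)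
        (Primrec₂.comp Primrec.list_cons (Primrec.snd.comp hF)
          (Primrec.const [])))
  exact Primrec.to_comp (h1.of_eq (fun T => rfl))

end PrimrecProofs
theorem eldimle2 : EldimLe Hset 2 :=
  ⟨Algo, computable_Algo, fun T => ⟨rfl, algo_dead T⟩⟩

theorem eldim_eq_two : Eldim Hset = 2 := by
  apply le_antisymm
  · exact sInf_le ⟨2, eldimle2, rfl⟩
  · apply le_sInf
    rintro x ⟨dd, hdd, rfl⟩
    rw [Set.mem_setOf_eq] at hdd
    by_contra hlt
    push_neg at hlt
    have hdd2 : dd < 2 := by exact_mod_cast hlt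
    interval_cases dd
    · exact not_eldim0 hdd
    · exact not_eldim1 hdd

end S18

theorem stmt18 :
    ∃ H : Set (ℕ → Bool), Eldim H = 2 ∧
      ∀ d : ℕ, ¬ ∃ L : Sample × ℕ →. Bool, Partrec L ∧
        (∀ (S : Sample) (x : ℕ), Realizable H S → (L (S, x)).Dom) ∧
        (∀ S : Sample, Realizable H S → pmistakes L S ≤ d) := by
  exact ⟨S18.Hset, S18.eldim_eq_two, fun d => S18.no_learner d⟩
end
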